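/- arXiv:2308.08604 — 4 statements merged into one kernel-verified Lean document; each statement's English description precedes it below -/
import Mathlib

section
/- Let G be a finite simple graph with at least one edge and let I = I(G) be its edge ideal. Then v(I^{n+1}) ≤ 2n + v(I) for all n ≥ 1. -/
open MvPolynomial

noncomputable section

/-- The `v`-number of a graded ideal `I ⊆ K[x_1,…,x_t]`: the least `k ≥ 0` such that there is a
homogeneous polynomial `f` of degree `k` with `(I : f)` an associated prime of `S/I`. -/
def vNumber {σ K : Type*} [Field K] (I : Ideal (MvPolynomial σ K)) : ℕ :=
  sInf {k : ℕ | ∃ f : MvPolynomial σ K, f.IsHomogeneous k ∧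
    Submodule.colon I (Ideal.span {f}) ∈
      associatedPrimes (MvPolynomial σ K) (MvPolynomial σ K ⧸ I)}

/-- The edge ideal of a simple graph: generated by `x_i * x_j` for edges `{x_i, x_j}`. -/
def edgeIdeal (K : Type*) [Field K] {V : Type*} (G : SimpleGraph V) :
    Ideal (MvPolynomial V K) :=
  Ideal.span {m | ∃ i j, G.Adj i j ∧ m = X i * X j}

/-- `I` is a monomial ideal: generated by a set of monomials. -/
def IsMonomialIdeal {σ K : Type*} [Field K] (I : Ideal (MvPolynomial σ K)) : Prop :=
  ∃ A : Set (σ →₀ ℕ), I = Ideal.span ((fun a => (monomial a (1 : K))) '' A)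

/-- The graded maximal ideal `𝔪 = ⟨x_1,…,x_t⟩`. -/
def maxIdeal (K : Type*) [Field K] (σ : Type*) : Ideal (MvPolynomial σ K) :=
  Ideal.span (Set.range (X : σ → MvPolynomial σ K))

/-- `α(I)`: the minimum degree of a nonzero element of `I`. -/
def alphaNumber {σ K : Type*} [Field K] (I : Ideal (MvPolynomial σ K)) : ℕ :=
  sInf {d : ℕ | ∃ f ∈ I, f ≠ 0 ∧ f.totalDegree = d}

/-- Exponent vectors of the minimal monomial generators of a monomial ideal `I`:
monomials in `I` none of whose proper divisors lies in `I`. -/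
def minimalGenerators {σ K : Type*} [Field K] (I : Ideal (MvPolynomial σ K)) :
    Set (σ →₀ ℕ) :=
  {a | (monomial a (1 : K)) ∈ I ∧
    ∀ b : σ →₀ ℕ, b ≤ a → b ≠ a → (monomial b (1 : K)) ∉ I}

namespace VNumAux

open Finsupp Pointwise

variable {K : Type*} [Field K] {V : Type*}

/-- exponent vectors of edges -/
def ES (G : SimpleGraph V) : Set (V →₀ ℕ) :=
  {a | ∃ i j, G.Adj i j ∧ a = Finsupp.single i 1 + Finsupp.single j 1}

lemma X_mul_X (i j : V) :
    (X i * X j : MvPolynomial V K) =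
      monomial (Finsupp.single i 1 + Finsupp.single j 1) 1 := by
  rw [show (X i : MvPolynomial V K) = monomial (Finsupp.single i 1) 1 from rfl,
    show (X j : MvPolynomial V K) = monomial (Finsupp.single j 1) 1 from rfl,
    monomial_mul, one_mul]

lemma edgeIdeal_eq (G : SimpleGraph V) :
    edgeIdeal K G = Ideal.span ((fun a => (monomial a (1 : K))) '' ES G) := by
  unfold edgeIdeal
  congr 1
  ext m
  constructor
  · rintro ⟨i, j, h, rfl⟩
    exact ⟨_, ⟨i, j, h, rfl⟩, (X_mul_X i j).symm⟩
  · rintro ⟨a, ⟨i, j, h, rfl⟩, rfl⟩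
    exact ⟨i, j, h, (X_mul_X i j).symm⟩

lemma image_mul (A B : Set (V →₀ ℕ)) :
    Ideal.span ((fun a => (monomial a (1 : K))) '' A) *
        Ideal.span ((fun a => (monomial a (1 : K))) '' B) =
      Ideal.span ((fun a => (monomial a (1 : K))) '' (A + B)) := by
  rw [Ideal.span_mul_span']
  congr 1
  ext x
  constructor
  · rintro ⟨_, ⟨a, ha, rfl⟩, _, ⟨b, hb, rfl⟩, rfl⟩
    exact ⟨a + b, Set.add_mem_add ha hb, by
      show (monomial (a + b)) (1:K) = monomial a 1 * monomial b 1
      rw [monomial_mul, one_mul]⟩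
  · rintro ⟨c, ⟨a, ha, b, hb, rfl⟩, rfl⟩
    refine ⟨_, ⟨a, ha, rfl⟩, _, ⟨b, hb, rfl⟩, ?_⟩
    show monomial a (1:K) * monomial b 1 = monomial (a + b) 1
    rw [monomial_mul, one_mul]

lemma edgeIdeal_pow (G : SimpleGraph V) (m : ℕ) :
    edgeIdeal K G ^ m = Ideal.span ((fun a => (monomial a (1 : K))) '' (m • ES G)) := by
  induction m with
  | zero =>
      rw [pow_zero, zero_smul]
      rw [show (0 : Set (V →₀ ℕ)) = {0} from rfl, Set.image_singleton]
      rw [show (monomial (0 : V →₀ ℕ)) (1:K) = 1 by simp]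
      rw [Ideal.span_singleton_one, Ideal.one_eq_top]
  | succ m ih =>
      rw [pow_succ, ih, edgeIdeal_eq (K := K), image_mul, succ_nsmul]


lemma mem_pow_iff (G : SimpleGraph V) (m : ℕ) (p : MvPolynomial V K) :
    p ∈ edgeIdeal K G ^ m ↔ ∀ ν ∈ p.support, ∃ c ∈ m • ES G, c ≤ ν := by
  rw [edgeIdeal_pow, mem_ideal_span_monomial_image]

lemma mem_iff (G : SimpleGraph V) (p : MvPolynomial V K) :
    p ∈ edgeIdeal K G ↔ ∀ ν ∈ p.support, ∃ c ∈ ES G, c ≤ ν := by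
  conv_lhs => rw [show edgeIdeal K G = edgeIdeal K G ^ 1 from (pow_one _).symm]
  rw [mem_pow_iff, one_nsmul]

/-- weight of an exponent vector relative to a set of variables -/
def wt (C : Finset V) (a : V →₀ ℕ) : ℕ := ∑ i ∈ C, a i

lemma wt_add (C : Finset V) (a b : V →₀ ℕ) : wt C (a + b) = wt C a + wt C b := by
  simp [wt, Finset.sum_add_distrib]

lemma wt_mono (C : Finset V) {a b : V →₀ ℕ} (h : a ≤ b) : wt C a ≤ wt C b :=
  Finset.sum_le_sum fun i _ => (Finsupp.le_def.mp h) i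

lemma wt_single_mem {C : Finset V} {i : V} (h : i ∈ C) : wt C (Finsupp.single i 1) = 1 := by
  classical
  simp only [wt, Finsupp.single_apply]
  rw [Finset.sum_ite_eq C i (fun _ => 1), if_pos h]

lemma wt_single_not_mem {C : Finset V} {i : V} (h : i ∉ C) :
    wt C (Finsupp.single i 1) = 0 := by
  classical
  simp only [wt, Finsupp.single_apply]
  rw [Finset.sum_ite_eq C i (fun _ => 1), if_neg h]

lemma wt_smul (C : Finset V) (n : ℕ) (a : V →₀ ℕ) : wt C (n • a) = n * wt C a := by
  simp [wt, Finset.mul_sum]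

def IsCover (G : SimpleGraph V) (C : Finset V) : Prop :=
  ∀ i j, G.Adj i j → i ∈ C ∨ j ∈ C

lemma wt_of_mem_ES {G : SimpleGraph V} {C : Finset V} (hC : IsCover G C) {c : V →₀ ℕ}
    (hc : c ∈ ES G) : 1 ≤ wt C c := by
  obtain ⟨i, j, hij, rfl⟩ := hc
  rw [wt_add]
  rcases hC i j hij with h | h
  · have h1 : wt C (Finsupp.single i 1) = 1 := wt_single_mem h
    omega
  · have h1 : wt C (Finsupp.single j 1) = 1 := wt_single_mem h
    omega

lemma wt_of_mem_smul {G : SimpleGraph V} {C : Finset V} (hC : IsCover G C) :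
    ∀ (m : ℕ) (c : V →₀ ℕ), c ∈ m • ES G → m ≤ wt C c := by
  intro m
  induction m with
  | zero => intro c _; exact Nat.zero_le _
  | succ m ih =>
      intro c hc
      rw [succ_nsmul] at hc
      obtain ⟨a, ha, b, hb, rfl⟩ := Set.mem_add.mp hc
      have h1 := ih a ha
      have h2 := wt_of_mem_ES hC hb
      rw [wt_add]
      omega


set_option maxHeartbeats 1000000 in
lemma radical_step [LinearOrder V] {G : SimpleGraph V} {f : MvPolynomial V K}
    (h : f * f ∈ edgeIdeal K G) : f ∈ edgeIdeal K G := by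
  classical
  by_contra hf
  rw [mem_iff] at hf
  push_neg at hf
  obtain ⟨ν₀, hν₀s, hν₀⟩ := hf
  set T : Finset (V →₀ ℕ) := f.support.filter (fun ν => ∀ c ∈ ES G, ¬ c ≤ ν) with hT
  set g : MvPolynomial V K := ∑ ν ∈ T, monomial ν (coeff ν f) with hg
  have hcoe : ∀ ν, coeff ν g = if ν ∈ T then coeff ν f else 0 := by
    intro ν
    rw [hg, coeff_sum]
    rw [Finset.sum_congr rfl (fun μ _ => coeff_monomial ν μ (coeff μ f))]
    exact Finset.sum_ite_eq' T ν (fun μ => coeff μ f)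
  have hν₀T : ν₀ ∈ T := Finset.mem_filter.mpr ⟨hν₀s, hν₀⟩
  have hfg : f - g ∈ edgeIdeal K G := by
    rw [mem_iff]
    intro ν hν
    have hc : coeff ν (f - g) ≠ 0 := MvPolynomial.mem_support_iff.mp hν
    rw [coeff_sub, hcoe] at hc
    by_cases hνT : ν ∈ T
    · rw [if_pos hνT, sub_self] at hc
      exact absurd rfl hc
    · rw [if_neg hνT, sub_zero] at hc
      have hνs : ν ∈ f.support := MvPolynomial.mem_support_iff.mpr hc
      by_contra hcon
      push_neg at hcon
      exact hνT (Finset.mem_filter.mpr ⟨hνs, hcon⟩)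
  have hgg : g * g ∈ edgeIdeal K G := by
    have hid : g * g = f * f - (f * (f - g) + (f - g) * g) := by ring
    rw [hid]
    exact Ideal.sub_mem _ h (Ideal.add_mem _ (Ideal.mul_mem_left _ _ hfg)
      (Ideal.mul_mem_right _ _ hfg))
  have hgne : g ≠ 0 := by
    intro h0
    have h1 := hcoe ν₀
    rw [h0, if_pos hν₀T] at h1
    exact (MvPolynomial.mem_support_iff.mp hν₀s) ((MvPolynomial.coeff_zero ν₀).symm.trans h1).symm
  have hgsupp : g.support.Nonempty := by
    rw [Finset.nonempty_iff_ne_empty]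
    intro h0
    exact hgne (MvPolynomial.support_eq_empty.mp h0)
  obtain ⟨μ, hμs, hμmax⟩ := Finset.exists_max_image g.support (fun ν => toLex ν) hgsupp
  have hμT : μ ∈ T := by
    have := MvPolynomial.mem_support_iff.mp hμs
    rw [hcoe] at this
    by_contra hμT
    rw [if_neg hμT] at this
    exact this rfl
  have key : coeff (μ + μ) (g * g) = coeff μ g * coeff μ g := by
    rw [coeff_mul]
    apply Finset.sum_eq_single_of_mem (μ, μ) (Finset.HasAntidiagonal.mem_antidiagonal.mpr rfl)
    · rintro ⟨a, b⟩ hab hne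
      rw [Finset.HasAntidiagonal.mem_antidiagonal] at hab
      by_contra hz
      have ha : a ∈ g.support := MvPolynomial.mem_support_iff.mpr (left_ne_zero_of_mul hz)
      have hb : b ∈ g.support := MvPolynomial.mem_support_iff.mpr (right_ne_zero_of_mul hz)
      have haμ : toLex a ≤ toLex μ := hμmax a ha
      have hbμ : toLex b ≤ toLex μ := hμmax b hb
      have haμ' : a = μ := by
        rcases lt_or_eq_of_le haμ with hlt | heq
        · exfalso
          have hlt2 : toLex (a + b) < toLex (μ + μ) := by
            rw [toLex_add, toLex_add]
            calc toLex a + toLex b < toLex μ + toLex b := add_lt_add_left hlt _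
              _ ≤ toLex μ + toLex μ := add_le_add le_rfl hbμ
          rw [hab] at hlt2
          exact lt_irrefl _ hlt2
        · exact toLex.injective heq
      have hbμ' : b = μ := by
        rw [haμ'] at hab
        exact add_left_cancel hab
      exact hne (Prod.ext haμ' hbμ')
  have hμμ : (μ + μ) ∈ (g * g).support := by
    rw [MvPolynomial.mem_support_iff, key]
    exact mul_ne_zero (MvPolynomial.mem_support_iff.mp hμs) (MvPolynomial.mem_support_iff.mp hμs)
  rw [mem_iff] at hgg
  obtain ⟨c, hcE, hcle⟩ := hgg _ hμμ
  obtain ⟨i, j, hij, rfl⟩ := hcE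
  have hne : i ≠ j := hij.ne
  have hi : 1 ≤ μ i := by
    have h1 := Finsupp.le_def.mp hcle i
    have h2 : ((Finsupp.single i 1 + Finsupp.single j 1 : V →₀ ℕ)) i = 1 := by
      rw [Finsupp.add_apply, Finsupp.single_apply, Finsupp.single_apply,
        if_pos rfl, if_neg (Ne.symm hne)]
      omega
    have h3 : ((μ + μ : V →₀ ℕ)) i = μ i + μ i := Finsupp.add_apply μ μ i
    rw [h2, h3] at h1
    omega
  have hj : 1 ≤ μ j := by
    have h1 := Finsupp.le_def.mp hcle j
    have h2 : ((Finsupp.single i 1 + Finsupp.single j 1 : V →₀ ℕ)) j = 1 := by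
      rw [Finsupp.add_apply, Finsupp.single_apply, Finsupp.single_apply,
        if_neg hne, if_pos rfl]
    have h3 : ((μ + μ : V →₀ ℕ)) j = μ j + μ j := Finsupp.add_apply μ μ j
    rw [h2, h3] at h1
    omega
  have hle : (Finsupp.single i 1 + Finsupp.single j 1 : V →₀ ℕ) ≤ μ := by
    rw [Finsupp.le_def]
    intro x
    rw [Finsupp.add_apply]
    by_cases hix : i = x
    · subst hix
      rw [Finsupp.single_apply, if_pos rfl, Finsupp.single_apply, if_neg (Ne.symm hne)]
      omega
    · by_cases hjx : j = x
      · subst hjx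
        rw [Finsupp.single_apply, if_neg hix, Finsupp.single_apply, if_pos rfl]
        omega
      · rw [Finsupp.single_apply, if_neg hix, Finsupp.single_apply, if_neg hjx]
        exact Nat.zero_le _
  exact (Finset.mem_filter.mp hμT).2 _ ⟨i, j, hij, rfl⟩ hle

lemma colon_eq_annihilator (I : Ideal (MvPolynomial V K)) (f : MvPolynomial V K) :
    Submodule.colon I (Ideal.span {f}) =
      (Submodule.span (MvPolynomial V K)
        {(Ideal.Quotient.mk I f : MvPolynomial V K ⧸ I)}).annihilator := by
  ext r
  rw [Submodule.mem_annihilator_span_singleton, Ideal.mem_colon_span_singleton]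
  have hsmul : r • (Ideal.Quotient.mk I f : MvPolynomial V K ⧸ I) =
      Ideal.Quotient.mk I (r * f) := rfl
  rw [hsmul, Ideal.Quotient.eq_zero_iff_mem]


lemma hc_mul_homog (p f₀ : MvPolynomial V K) {k : ℕ}
    (hf₀ : f₀.IsHomogeneous k) (hf₀0 : f₀ ≠ 0) (i : ℕ) :
    homogeneousComponent (i + k) (p * f₀) = homogeneousComponent i p * f₀ := by
  by_cases hi : i ≤ p.totalDegree
  · conv_lhs => rw [← sum_homogeneousComponent p, Finset.sum_mul]
    rw [map_sum]
    rw [Finset.sum_congr rfl (fun j _ => homogeneousComponent_of_mem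
      ((mem_homogeneousSubmodule _ _).mpr
        ((homogeneousComponent_isHomogeneous j p).mul hf₀)))]
    rw [Finset.sum_congr rfl (fun j (_ : j ∈ Finset.range (p.totalDegree + 1)) => by
      by_cases hji : j = i
      · subst hji; rw [if_pos rfl, if_pos rfl]
      · rw [if_neg (fun hc : i + k = j + k => hji (by omega)),
          if_neg (fun hc : j = i => hji hc)]
      : ∀ j ∈ Finset.range (p.totalDegree + 1),
        (if i + k = j + k then homogeneousComponent j p * f₀ else 0) =
          (if j = i then homogeneousComponent j p * f₀ else 0))]
    rw [Finset.sum_ite_eq' (Finset.range (p.totalDegree + 1)) i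
      (fun j => homogeneousComponent j p * f₀)]
    rw [if_pos (Finset.mem_range.mpr (by omega))]
  · push_neg at hi
    rw [homogeneousComponent_eq_zero _ _ hi, zero_mul]
    apply homogeneousComponent_eq_zero
    calc (p * f₀).totalDegree ≤ p.totalDegree + f₀.totalDegree := totalDegree_mul p f₀
      _ = p.totalDegree + k := by rw [hf₀.totalDegree hf₀0]
      _ < i + k := by omega

lemma exists_hom_witness [Fintype V] (I : Ideal (MvPolynomial V K)) (hI : I ≠ ⊤)
    (hmono : ∀ p ∈ I, ∀ n, homogeneousComponent n p ∈ I) :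
    ∃ (k : ℕ) (f : MvPolynomial V K), f.IsHomogeneous k ∧
      Submodule.colon I (Ideal.span {f}) ∈
        associatedPrimes (MvPolynomial V K) (MvPolynomial V K ⧸ I) := by
  classical
  set SS : Set (Ideal (MvPolynomial V K)) :=
    {J | ∃ k f, MvPolynomial.IsHomogeneous f k ∧ f ∉ I ∧
      J = Submodule.colon I (Ideal.span {f})} with hSSdef
  have hSS : SS.Nonempty :=
    ⟨_, 0, 1, isHomogeneous_one _ _, fun h => hI ((Ideal.eq_top_iff_one I).mpr h), rfl⟩
  obtain ⟨P, hPSS, hPmax⟩ := set_has_maximal_iff_noetherian.mpr inferInstance SS hSS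
  obtain ⟨k, f₀, hf₀hom, hf₀I, hPeq⟩ := hPSS
  have hf₀0 : f₀ ≠ 0 := fun h => hf₀I (h ▸ I.zero_mem)
  have hPel : ∀ p, p ∈ P ↔ p * f₀ ∈ I := by
    intro p; rw [hPeq, Ideal.mem_colon_span_singleton]
  have hPgr : ∀ p ∈ P, ∀ i, homogeneousComponent i p ∈ P := by
    intro p hp i
    rw [hPel] at hp ⊢
    rw [← hc_mul_homog p f₀ hf₀hom hf₀0 i]
    exact hmono _ hp _
  have hPsum : ∀ p, (∀ i, homogeneousComponent i p ∈ P) → p ∈ P := fun p h => by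
    have hs := Ideal.sum_mem (show Ideal (MvPolynomial V K) from P)
      (fun i (_ : i ∈ Finset.range (p.totalDegree + 1)) => h i)
    rwa [sum_homogeneousComponent] at hs
  have hhom : ∀ (a b : MvPolynomial V K) (j : ℕ), b.IsHomogeneous j →
      a * b ∈ P → b ∉ P → a ∈ P := by
    intro a b j hbj hab hbP
    have hbf : b * f₀ ∉ I := by rwa [hPel] at hbP
    have hJ : Submodule.colon I (Ideal.span {b * f₀}) ∈ SS :=
      ⟨j + k, b * f₀, hbj.mul hf₀hom, hbf, rfl⟩
    have hle : P ≤ Submodule.colon I (Ideal.span {b * f₀}) := by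
      intro q hq
      rw [Ideal.mem_colon_span_singleton]
      rw [hPel] at hq
      have hq2 : q * (b * f₀) = (q * f₀) * b := by ring
      rw [hq2]
      exact Ideal.mul_mem_right _ _ hq
    have hPJ : P = Submodule.colon I (Ideal.span {b * f₀}) := by
      by_contra hne
      exact hPmax _ hJ (lt_of_le_of_ne hle hne)
    rw [hPJ, Ideal.mem_colon_span_singleton]
    have ha2 : a * (b * f₀) = (a * b) * f₀ := by ring
    rw [ha2]
    exact (hPel _).mp hab
  have hprime : Ideal.IsPrime P := by
    constructor
    · intro htop
      rw [Ideal.eq_top_iff_one] at htop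
      have h1 := (hPel 1).mp htop
      rw [one_mul] at h1
      exact hf₀I h1
    · intro a b hab
      by_contra hcon
      push_neg at hcon
      obtain ⟨haP, hbP⟩ := hcon
      have hfind : ∀ c : MvPolynomial V K, c ∉ P →
          ∃ i, i ∈ (Finset.range (c.totalDegree + 1)).filter
            (fun i => homogeneousComponent i c ∉ P) := by
        intro c hcP
        have hA : ∃ i, homogeneousComponent i c ∉ P := by
          by_contra hno; push_neg at hno
          exact hcP (hPsum c hno)
        obtain ⟨i, hi⟩ := hA
        have hiD : i ≤ c.totalDegree := by
          by_contra hgt; push_neg at hgt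
          exact hi (by rw [homogeneousComponent_eq_zero _ _ hgt]; exact P.zero_mem)
        exact ⟨i, Finset.mem_filter.mpr ⟨Finset.mem_range.mpr (by omega), hi⟩⟩
      obtain ⟨_, hAne⟩ := hfind a haP
      obtain ⟨_, hBne⟩ := hfind b hbP
      set A := (Finset.range (a.totalDegree + 1)).filter
        (fun i => homogeneousComponent i a ∉ P) with hAdef
      set B := (Finset.range (b.totalDegree + 1)).filter
        (fun i => homogeneousComponent i b ∉ P) with hBdef
      have hAne' : A.Nonempty := ⟨_, hAne⟩
      have hBne' : B.Nonempty := ⟨_, hBne⟩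
      set ia := A.max' hAne' with hia
      set jb := B.max' hBne' with hjb
      have hiaP : homogeneousComponent ia a ∉ P := (Finset.mem_filter.mp (A.max'_mem hAne')).2
      have hjbP : homogeneousComponent jb b ∉ P := (Finset.mem_filter.mp (B.max'_mem hBne')).2
      have hiaD : ia ≤ a.totalDegree := by
        have := (Finset.mem_filter.mp (A.max'_mem hAne')).1
        rw [Finset.mem_range] at this; omega
      have hjbD : jb ≤ b.totalDegree := by
        have := (Finset.mem_filter.mp (B.max'_mem hBne')).1
        rw [Finset.mem_range] at this; omega
      have hiagt : ∀ i, ia < i → homogeneousComponent i a ∈ P := by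
        intro i hi
        by_contra hnP
        by_cases hiD : i ≤ a.totalDegree
        · have := A.le_max' i (Finset.mem_filter.mpr ⟨Finset.mem_range.mpr (by omega), hnP⟩)
          omega
        · push_neg at hiD
          exact hnP (by rw [homogeneousComponent_eq_zero _ _ hiD]; exact P.zero_mem)
      have hjbgt : ∀ j, jb < j → homogeneousComponent j b ∈ P := by
        intro j hj
        by_contra hnP
        by_cases hjD : j ≤ b.totalDegree
        · have := B.le_max' j (Finset.mem_filter.mpr ⟨Finset.mem_range.mpr (by omega), hnP⟩)
          omega
        · push_neg at hjD
          exact hnP (by rw [homogeneousComponent_eq_zero _ _ hjD]; exact P.zero_mem)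
      have habP : homogeneousComponent (ia + jb) (a * b) ∈ P := hPgr _ hab _
      have hexp2 : homogeneousComponent (ia + jb) (a * b) =
          ∑ x ∈ (Finset.range (a.totalDegree + 1)) ×ˢ (Finset.range (b.totalDegree + 1)),
            (if ia + jb = x.1 + x.2 then
              homogeneousComponent x.1 a * homogeneousComponent x.2 b else 0) := by
        conv_lhs => rw [← sum_homogeneousComponent a, ← sum_homogeneousComponent b,
          Finset.sum_mul_sum]
        rw [← Finset.sum_product']
        rw [map_sum]
        refine Finset.sum_congr rfl fun x _ => ?_
        exact homogeneousComponent_of_mem ((mem_homogeneousSubmodule _ _).mpr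
          ((homogeneousComponent_isHomogeneous x.1 a).mul
            (homogeneousComponent_isHomogeneous x.2 b)))
      have hmemP : ((ia, jb) : ℕ × ℕ) ∈
          (Finset.range (a.totalDegree + 1)) ×ˢ (Finset.range (b.totalDegree + 1)) :=
        Finset.mem_product.mpr ⟨Finset.mem_range.mpr (by omega), Finset.mem_range.mpr (by omega)⟩
      rw [hexp2, ← Finset.add_sum_erase _ _ hmemP] at habP
      have hrest : ∑ x ∈ ((Finset.range (a.totalDegree + 1)) ×ˢ
          (Finset.range (b.totalDegree + 1))).erase (ia, jb),
            (if ia + jb = x.1 + x.2 then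
              homogeneousComponent x.1 a * homogeneousComponent x.2 b else 0) ∈ P := by
        apply Ideal.sum_mem
        rintro ⟨i, j⟩ hx
        have hxne : (i, j) ≠ (ia, jb) := (Finset.mem_erase.mp hx).1
        by_cases hN : ia + jb = i + j
        · rw [if_pos hN]
          have hor : ia < i ∨ jb < j := by
            by_contra hno; push_neg at hno
            obtain ⟨h1, h2⟩ := hno
            have hieq : i = ia ∧ j = jb := by omega
            exact hxne (by rw [hieq.1, hieq.2])
          rcases hor with hlt | hlt
          · exact Ideal.mul_mem_right _ _ (hiagt i hlt)
          · exact Ideal.mul_mem_left _ _ (hjbgt j hlt)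
        · rw [if_neg hN]; exact P.zero_mem
      have hfirst : (if ia + jb = ia + jb then
          homogeneousComponent ia a * homogeneousComponent jb b else 0) ∈ P := by
        have := P.sub_mem habP hrest
        simpa using this
      rw [if_pos rfl] at hfirst
      exact hiaP (hhom _ _ jb (homogeneousComponent_isHomogeneous jb b) hfirst hjbP)
  refine ⟨k, f₀, hf₀hom, ?_⟩
  rw [← hPeq]
  exact ⟨hprime, ⟨Ideal.Quotient.mk I f₀, by
    rw [Submodule.bot_colon', ← colon_eq_annihilator I f₀, ← hPeq, hprime.radical]⟩⟩


lemma hmono_pow (G : SimpleGraph V) (m : ℕ) :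
    ∀ p ∈ edgeIdeal K G ^ m, ∀ n, homogeneousComponent n p ∈ edgeIdeal K G ^ m := by
  intro p hp n
  rw [mem_pow_iff] at hp ⊢
  intro ν hν
  apply hp
  rw [MvPolynomial.mem_support_iff] at hν ⊢
  rw [coeff_homogeneousComponent] at hν
  by_cases hd : ν.degree = n
  · rwa [if_pos hd] at hν
  · rw [if_neg hd] at hν
    exact absurd rfl hν

lemma edgeIdeal_ne_top (G : SimpleGraph V) : edgeIdeal K G ≠ ⊤ := by
  classical
  intro h
  have h1 : (1 : MvPolynomial V K) ∈ edgeIdeal K G := h ▸ Submodule.mem_top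
  rw [mem_iff] at h1
  have h0 : (0 : V →₀ ℕ) ∈ (1 : MvPolynomial V K).support := by
    rw [MvPolynomial.mem_support_iff]
    rw [show coeff (0 : V →₀ ℕ) (1 : MvPolynomial V K) = 1 from coeff_zero_one]
    exact one_ne_zero
  obtain ⟨c, ⟨i, j, hij, rfl⟩, hle⟩ := h1 _ h0
  have h2 := Finsupp.le_def.mp hle i
  rw [Finsupp.add_apply, Finsupp.single_apply, Finsupp.single_apply,
    if_pos rfl, if_neg (Ne.symm hij.ne)] at h2
  simp at h2

end VNumAux

/-- for the edge ideal I of a graph, v(I^{n+1}) ≤ 2n + v(I) for all n ≥ 1. -/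
theorem vNumber_pow_edgeIdeal_le {K : Type*} [Field K] {V : Type*} [Fintype V]
    (G : SimpleGraph V) (hedge : ∃ u v, G.Adj u v) :
    ∀ n, 1 ≤ n → vNumber ((edgeIdeal K G) ^ (n + 1)) ≤ 2 * n + vNumber (edgeIdeal K G) := by
  intro n _hn
  classical
  obtain ⟨u₀, v₀, huv⟩ := hedge
  set I := edgeIdeal K G with hIdef
  have hItop : I ≠ ⊤ := VNumAux.edgeIdeal_ne_top G
  have hm : ∀ p ∈ I, ∀ m, homogeneousComponent m p ∈ I := by
    have h1 := VNumAux.hmono_pow (K := K) G 1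
    rw [pow_one] at h1
    exact h1
  obtain ⟨k₀, f₀, hf₀, hass₀⟩ := VNumAux.exists_hom_witness I hItop hm
  have hsetne : {k : ℕ | ∃ f : MvPolynomial V K, f.IsHomogeneous k ∧
      Submodule.colon I (Ideal.span {f}) ∈
        associatedPrimes (MvPolynomial V K) (MvPolynomial V K ⧸ I)}.Nonempty :=
    ⟨k₀, f₀, hf₀, hass₀⟩
  have hv : vNumber I ∈ {k : ℕ | ∃ f : MvPolynomial V K, f.IsHomogeneous k ∧
      Submodule.colon I (Ideal.span {f}) ∈
        associatedPrimes (MvPolynomial V K) (MvPolynomial V K ⧸ I)} := Nat.sInf_mem hsetne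
  obtain ⟨f, hfhom, hfass⟩ := hv
  have hprime : Ideal.IsPrime (Submodule.colon I (Ideal.span {f})) := hfass.1
  set P : Ideal (MvPolynomial V K) := Submodule.colon I (Ideal.span {f}) with hP
  have hfI : f ∉ I := by
    intro hf
    apply hprime.ne_top
    rw [Ideal.eq_top_iff_one]
    rw [show P = Submodule.colon I (Ideal.span {f}) from rfl, Ideal.mem_colon_span_singleton, one_mul]
    exact hf
  have hIP : I ≤ P := fun q hq => by
    rw [show P = Submodule.colon I (Ideal.span {f}) from rfl, Ideal.mem_colon_span_singleton]
    exact Ideal.mul_mem_right _ _ hq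
  set C₀ : Finset V := Finset.univ.filter (fun i => (X i : MvPolynomial V K) ∈ P) with hC₀def
  have hXC₀ : ∀ i, i ∈ C₀ ↔ (X i : MvPolynomial V K) ∈ P := by
    intro i
    rw [hC₀def, Finset.mem_filter]
    simp
  have hC₀ : VNumAux.IsCover G C₀ := by
    intro i j hij
    have hXX : (X i * X j : MvPolynomial V K) ∈ I := Ideal.subset_span ⟨i, j, hij, rfl⟩
    rcases hprime.mem_or_mem (hIP hXX) with h | h
    · left; exact (hXC₀ i).mpr h
    · right; exact (hXC₀ j).mpr h
  -- minimal cover inside C₀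
  set covS : Set ℕ := {m | ∃ D : Finset V, (D ⊆ C₀ ∧ VNumAux.IsCover G D) ∧ D.card = m}
    with hcovSdef
  have hcovne : covS.Nonempty := ⟨C₀.card, C₀, ⟨subset_rfl, hC₀⟩, rfl⟩
  obtain ⟨C', ⟨hC'sub, hC'cov⟩, hC'card⟩ := Nat.sInf_mem hcovne
  have hminim : ∀ D : Finset V, D ⊆ C₀ → VNumAux.IsCover G D → C'.card ≤ D.card := by
    intro D h1 h2
    rw [hC'card]
    exact Nat.sInf_le ⟨D, ⟨h1, h2⟩, rfl⟩
  have hub : ∃ u b, G.Adj u b ∧ u ∈ C' ∧ b ∉ C' := by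
    have key : ∀ w z : V, G.Adj w z → w ∈ C' → ∃ u b, G.Adj u b ∧ u ∈ C' ∧ b ∉ C' := by
      intro w z hwz hw
      by_cases hcov' : VNumAux.IsCover G (C'.erase w)
      · exfalso
        have hle := hminim (C'.erase w) ((C'.erase_subset w).trans hC'sub) hcov'
        have hlt : (C'.erase w).card < C'.card := Finset.card_erase_lt_of_mem hw
        omega
      · rw [VNumAux.IsCover] at hcov'
        push_neg at hcov'
        obtain ⟨i, j, hij, hi, hj⟩ := hcov'
        rcases hC'cov i j hij with hiC | hjC
        · have hiw : i = w := by
            by_contra hne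
            exact hi (Finset.mem_erase.mpr ⟨hne, hiC⟩)
          subst hiw
          have hjC' : j ∉ C' := fun hj' => hj (Finset.mem_erase.mpr ⟨hij.ne', hj'⟩)
          exact ⟨i, j, hij, hw, hjC'⟩
        · have hjw : j = w := by
            by_contra hne
            exact hj (Finset.mem_erase.mpr ⟨hne, hjC⟩)
          subst hjw
          have hiC' : i ∉ C' := fun hi' => hi (Finset.mem_erase.mpr ⟨hij.ne, hi'⟩)
          exact ⟨j, i, hij.symm, hw, hiC'⟩
    rcases hC'cov u₀ v₀ huv with h | h
    · exact key u₀ v₀ huv h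
    · exact key v₀ u₀ huv.symm h
  obtain ⟨u, b, hub_adj, huC, hbC⟩ := hub
  set M : V →₀ ℕ := Finsupp.single u 1 + Finsupp.single b 1 with hM
  have heM : (X u * X b : MvPolynomial V K) = monomial M 1 := VNumAux.X_mul_X u b
  have heI : (X u * X b : MvPolynomial V K) ∈ I := Ideal.subset_span ⟨u, b, hub_adj, rfl⟩
  set f' : MvPolynomial V K := (X u * X b) ^ n * f with hf'
  have hf'hom : f'.IsHomogeneous (2 * n + vNumber I) := by
    have h1 : ((X u * X b : MvPolynomial V K) ^ n).IsHomogeneous (2 * n) := by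
      have h2 := ((isHomogeneous_X K u).mul (isHomogeneous_X K b)).pow n
      rw [show (1 + 1) * n = 2 * n by ring] at h2
      exact h2
    exact h1.mul hfhom
  have hcolon : Submodule.colon (I ^ (n + 1)) (Ideal.span {f'}) = P := by
    apply le_antisymm
    · intro p hp
      rw [Ideal.mem_colon_span_singleton] at hp
      have hmem' : p * f * (X u * X b) ^ n ∈ I ^ (n + 1) := by
        have heq : p * f' = p * f * (X u * X b) ^ n := by rw [hf']; ring
        rwa [heq] at hp
      have hpf : ∀ ν ∈ (p * f).support, ∃ i ∈ C', Finsupp.single i 1 ≤ ν := by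
        intro ν hν
        have hco : coeff ν (p * f) ≠ 0 := MvPolynomial.mem_support_iff.mp hν
        have hco2 : coeff (ν + n • M) (p * f * ((X u * X b) ^ n)) ≠ 0 := by
          rw [heM, monomial_pow, one_pow, coeff_mul_monomial]
          simpa using hco
        have hsup : ν + n • M ∈ (p * f * ((X u * X b) ^ n)).support :=
          MvPolynomial.mem_support_iff.mpr hco2
        rw [VNumAux.mem_pow_iff] at hmem'
        obtain ⟨c, hc, hcle⟩ := hmem' _ hsup
        have hwc : n + 1 ≤ VNumAux.wt C' c := VNumAux.wt_of_mem_smul hC'cov _ _ hc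
        have hwM : VNumAux.wt C' M = 1 := by
          rw [hM, VNumAux.wt_add, VNumAux.wt_single_mem huC, VNumAux.wt_single_not_mem hbC]
        have hwle : VNumAux.wt C' c ≤ VNumAux.wt C' ν + n := by
          have h3 := VNumAux.wt_mono C' hcle
          rw [VNumAux.wt_add, VNumAux.wt_smul, hwM] at h3
          omega
        have hwν : 1 ≤ VNumAux.wt C' ν := by omega
        by_contra hno
        push_neg at hno
        have hz : VNumAux.wt C' ν = 0 := Finset.sum_eq_zero fun i hi => by
          have h4 := hno i hi
          rw [Finsupp.single_le_iff] at h4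
          omega
        omega
      have hpfP : p * f ∈ P := by
        have hQ'le : Ideal.span ((fun a => (monomial a (1 : K))) ''
            ((fun i => Finsupp.single i 1) '' (C' : Set V))) ≤ P := by
          rw [Ideal.span_le]
          rintro x ⟨a, ⟨i, hi, rfl⟩, rfl⟩
          have hXi : (X i : MvPolynomial V K) ∈ P := (hXC₀ i).mp (hC'sub hi)
          exact hXi
        apply hQ'le
        rw [mem_ideal_span_monomial_image]
        intro ν hν
        obtain ⟨i, hi, hle⟩ := hpf ν hν
        exact ⟨Finsupp.single i 1, ⟨i, hi, rfl⟩, hle⟩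
      rcases hprime.mem_or_mem hpfP with h | h
      · exact h
      · exfalso
        apply hfI
        letI : LinearOrder V := LinearOrder.lift' (Fintype.equivFin V) (Fintype.equivFin V).injective
        apply VNumAux.radical_step (G := G)
        rw [show P = Submodule.colon I (Ideal.span {f}) from rfl,
          Ideal.mem_colon_span_singleton] at h
        exact h
    · intro q hq
      rw [Ideal.mem_colon_span_singleton]
      have hqf : q * f ∈ I := by
        rw [show P = Submodule.colon I (Ideal.span {f}) from rfl,
          Ideal.mem_colon_span_singleton] at hq
        exact hq
      have heq2 : q * f' = (X u * X b) ^ n * (q * f) := by rw [hf']; ring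
      rw [heq2, pow_succ]
      exact Ideal.mul_mem_mul (Ideal.pow_mem_pow heI n) hqf
  have hwit : (2 * n + vNumber I) ∈ {k : ℕ | ∃ g : MvPolynomial V K, g.IsHomogeneous k ∧
      Submodule.colon (I ^ (n + 1)) (Ideal.span {g}) ∈
        associatedPrimes (MvPolynomial V K) (MvPolynomial V K ⧸ (I ^ (n + 1)))} :=
    ⟨f', hf'hom, ⟨hcolon ▸ hprime,
      ⟨Ideal.Quotient.mk (I ^ (n + 1)) f', by
        rw [Submodule.bot_colon', ← VNumAux.colon_eq_annihilator, hcolon, hprime.radical]⟩⟩⟩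
  exact Nat.sInf_le hwit
end
end

section
/- Let G be a finite simple graph with at least one edge whose edge ideal I = I(G) satisfies v(I) = 1. Then v(I^{n+1}) = 2n + 1 for all n ≥ 1. -/
open MvPolynomial

noncomputable section

namespace VAux

variable {K : Type*} [Field K] {V : Type*}

/-! ### Finsupp degree helpers -/

lemma degree_single (i : V) (k : ℕ) : (Finsupp.single i k).degree = k := by
  classical
  rcases eq_or_ne k 0 with rfl | hk
  · simp [Finsupp.degree]
  · exact Finsupp.degree_single i k

lemma degree_add (μ ν : V →₀ ℕ) : (μ + ν).degree = μ.degree + ν.degree := by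
  simp only [Finsupp.degree_eq_weight_one, map_add]

lemma degree_mono {μ ν : V →₀ ℕ} (h : μ ≤ ν) : μ.degree ≤ ν.degree := by
  obtain ⟨c, rfl⟩ := le_iff_exists_add.1 h
  rw [degree_add]; exact Nat.le_add_right _ _

lemma degree_eq_one {μ : V →₀ ℕ} (h : μ.degree = 1) : ∃ w, μ = Finsupp.single w 1 := by
  classical
  have hne : μ ≠ 0 := by
    intro h0; rw [h0] at h; simp [Finsupp.degree] at h
  obtain ⟨w, hw⟩ := Finsupp.support_nonempty_iff.2 hne
  have hw1 : 1 ≤ μ w := Nat.one_le_iff_ne_zero.2 (Finsupp.mem_support_iff.1 hw)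
  have hsub : μ.support ⊆ {w} := by
    intro z hz
    by_contra hzw
    have hzw' : z ≠ w := by simpa using hzw
    have h2 : 2 ≤ μ.degree := by
      have : ({z, w} : Finset V) ⊆ μ.support := by
        intro t ht
        rcases Finset.mem_insert.1 ht with rfl | ht
        · exact hz
        · rw [Finset.mem_singleton] at ht
          subst ht
          exact hw
      calc 2 = 1 + 1 := rfl
        _ ≤ μ z + μ w := by
            have hz1 : 1 ≤ μ z := Nat.one_le_iff_ne_zero.2 (Finsupp.mem_support_iff.1 hz)
            exact Nat.add_le_add hz1 hw1
        _ = ∑ t ∈ ({z, w} : Finset V), μ t := by 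
            rw [Finset.sum_pair hzw']
        _ ≤ μ.degree := Finset.sum_le_sum_of_subset this
    omega
  refine ⟨w, ?_⟩
  have hμw : μ w = 1 := by
    have : μ.degree = ∑ t ∈ μ.support, μ t := rfl
    have hss : μ.support = {w} := Finset.Subset.antisymm hsub (by simpa using hw)
    rw [hss, Finset.sum_singleton] at this
    omega
  ext i
  rcases eq_or_ne i w with rfl | hiw
  · simp [hμw]
  · have : i ∉ μ.support := fun hi => hiw (Finset.mem_singleton.1 (hsub hi))
    rw [Finsupp.single_eq_of_ne' (Ne.symm hiw)]
    exact Finsupp.notMem_support_iff.1 this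

/-! ### Supports of elements of (powers of) the edge ideal -/

lemma support_edgeIdeal (G : SimpleGraph V) {h : MvPolynomial V K}
    (hh : h ∈ edgeIdeal K G) (μ : V →₀ ℕ) (hμ : μ ∈ h.support) :
    ∃ i j, G.Adj i j ∧ Finsupp.single i 1 + Finsupp.single j 1 ≤ μ := by
  classical
  induction hh using Submodule.span_induction generalizing μ with
  | mem x hx =>
    obtain ⟨i, j, hij, rfl⟩ := hx
    have hxm : (X i * X j : MvPolynomial V K)
        = monomial (Finsupp.single i 1 + Finsupp.single j 1) 1 := by
      rw [X, X, monomial_mul, one_mul]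
    rw [hxm] at hμ
    have := support_monomial_subset hμ
    rw [Finset.mem_singleton] at this
    exact ⟨i, j, hij, le_of_eq this.symm⟩
  | zero => simp at hμ
  | add x y hx hy ihx ihy =>
    rcases Finset.mem_union.1 (MvPolynomial.support_add hμ) with h' | h'
    · exact ihx _ h'
    · exact ihy _ h'
  | smul a x hx ihx =>
    rw [smul_eq_mul] at hμ
    obtain ⟨α, hα, β, hβ, rfl⟩ := Finset.mem_add.1 (MvPolynomial.support_mul _ _ hμ)
    obtain ⟨i, j, hij, hle⟩ := ihx _ hβ
    exact ⟨i, j, hij, hle.trans (le_add_self)⟩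

lemma support_edgeIdeal_pow (G : SimpleGraph V) (m : ℕ) :
    ∀ h : MvPolynomial V K, h ∈ (edgeIdeal K G) ^ m → ∀ μ ∈ h.support,
      ∃ l : List (V × V), l.length = m ∧ (∀ p ∈ l, G.Adj p.1 p.2) ∧
        (l.map fun p => Finsupp.single p.1 1 + Finsupp.single p.2 1).sum ≤ μ := by
  classical
  induction m with
  | zero =>
    intro h _ μ _
    exact ⟨[], rfl, by simp, by simp⟩
  | succ m ih =>
    intro h hh
    rw [pow_succ] at hh
    refine Submodule.mul_induction_on hh ?_ ?_
    · intro a ha b hb μ hμ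
      obtain ⟨α, hα, β, hβ, rfl⟩ := Finset.mem_add.1 (MvPolynomial.support_mul _ _ hμ)
      obtain ⟨l, hlen, hadj, hsum⟩ := ih a ha α hα
      obtain ⟨i, j, hij, hle⟩ := support_edgeIdeal G hb β hβ
      refine ⟨(i, j) :: l, by simp [hlen], ?_, ?_⟩
      · intro p hp
        rcases List.mem_cons.1 hp with rfl | hp
        · exact hij
        · exact hadj p hp
      · simp only [List.map_cons, List.sum_cons]
        rw [add_comm α β]
        exact add_le_add hle hsum
    · intro x y ihx ihy μ hμ
      rcases Finset.mem_union.1 (MvPolynomial.support_add hμ) with h' | h'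
      · exact ihx _ h'
      · exact ihy _ h'

lemma degree_evec_list_sum (l : List (V × V)) :
    (l.map fun p : V × V => Finsupp.single p.1 1 + Finsupp.single p.2 1).sum.degree
      = 2 * l.length := by
  induction l with
  | nil => simp [Finsupp.degree]
  | cons p l ihl =>
    simp only [List.map_cons, List.sum_cons, List.length_cons]
    rw [degree_add, degree_add, degree_single, degree_single, ihl]
    ring

lemma totalDegree_ge_of_mem_pow (G : SimpleGraph V) {m : ℕ} {h : MvPolynomial V K}
    (hh : h ∈ (edgeIdeal K G) ^ m) (h0 : h ≠ 0) : 2 * m ≤ h.totalDegree := by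
  obtain ⟨μ, hμ⟩ := MvPolynomial.support_nonempty.2 h0
  obtain ⟨l, hlen, _, hsum⟩ := support_edgeIdeal_pow G m h hh μ hμ
  have hdeg : (l.map fun p : V × V => Finsupp.single p.1 1 + Finsupp.single p.2 1).sum.degree
      = 2 * m := by rw [degree_evec_list_sum, hlen]
  have h1 : 2 * m ≤ μ.degree := hdeg ▸ degree_mono hsum
  have h2 : μ.degree ≤ h.totalDegree := by
    have := MvPolynomial.le_totalDegree hμ
    simpa [Finsupp.degree_apply, Finsupp.sum] using this
  omega

/-! ### Ideals generated by sets of variables -/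

lemma mem_span_X_iff {C : Set V} {h : MvPolynomial V K} :
    h ∈ Ideal.span ((X : V → MvPolynomial V K) '' C) ↔
      ∀ μ ∈ h.support, ∃ j ∈ C, μ j ≠ 0 := by
  classical
  constructor
  · intro hh
    induction hh using Submodule.span_induction with
    | mem x hx =>
      obtain ⟨j, hj, rfl⟩ := hx
      intro μ hμ
      rw [MvPolynomial.support_X, Finset.mem_singleton] at hμ
      exact ⟨j, hj, by simp [hμ]⟩
    | zero => simp
    | add x y hx hy ihx ihy =>
      intro μ hμ
      rcases Finset.mem_union.1 (MvPolynomial.support_add hμ) with h' | h'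
      · exact ihx _ h'
      · exact ihy _ h'
    | smul a x hx ihx =>
      intro μ hμ
      rw [smul_eq_mul] at hμ
      obtain ⟨α, hα, β, hβ, rfl⟩ := Finset.mem_add.1 (MvPolynomial.support_mul _ _ hμ)
      obtain ⟨j, hj, hj0⟩ := ihx _ hβ
      refine ⟨j, hj, ?_⟩
      simp only [Finsupp.add_apply]
      omega
  · intro hsupp
    have : h = ∑ μ ∈ h.support, monomial μ (coeff μ h) := (support_sum_monomial_coeff h).symm
    rw [this]
    refine Ideal.sum_mem _ ?_
    intro μ hμ
    obtain ⟨j, hj, hj0⟩ := hsupp μ hμ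
    have hle : Finsupp.single j 1 ≤ μ := Finsupp.single_le_iff.2 (Nat.one_le_iff_ne_zero.2 hj0)
    have hdec : monomial μ (coeff μ h)
        = X j * monomial (μ - Finsupp.single j 1) (coeff μ h) := by
      rw [X, monomial_mul, one_mul, add_tsub_cancel_of_le hle]
    rw [hdec]
    exact Ideal.mul_mem_right _ _ (Ideal.subset_span ⟨j, hj, rfl⟩)

lemma span_X_isPrime (C : Set V) :
    (Ideal.span ((X : V → MvPolynomial V K) '' C)).IsPrime := by
  classical
  set φ : MvPolynomial V K →ₐ[K] MvPolynomial V K :=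
    aeval (fun j => if j ∈ C then 0 else X j) with hφ
  have hker : Ideal.span ((X : V → MvPolynomial V K) '' C) = RingHom.ker φ.toRingHom := by
    have key : ∀ h : MvPolynomial V K,
        ∃ p ∈ Ideal.span ((X : V → MvPolynomial V K) '' C), h = p + φ h := by
      intro h
      induction h using MvPolynomial.induction_on' with
      | monomial μ c =>
        by_cases hex : ∃ j ∈ C, μ j ≠ 0
        · obtain ⟨j, hj, hj0⟩ := hex
          refine ⟨monomial μ c, ?_, ?_⟩
          · exact mem_span_X_iff.2 (by
              intro ν hν
              have := support_monomial_subset hν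
              rw [Finset.mem_singleton] at this
              exact ⟨j, hj, this ▸ hj0⟩)
          · have hz : φ (monomial μ c) = 0 := by
              rw [hφ, aeval_monomial]
              have : (μ.prod fun i k => (if i ∈ C then 0 else X i : MvPolynomial V K) ^ k) = 0 := by
                apply Finset.prod_eq_zero (Finsupp.mem_support_iff.2 hj0)
                show (if j ∈ C then (0 : MvPolynomial V K) else X j) ^ μ j = 0
                rw [if_pos hj]
                exact zero_pow hj0
              rw [this, mul_zero]
            rw [hz, add_zero]
        · push_neg at hex
          refine ⟨0, Ideal.zero_mem _, ?_⟩
          have : φ (monomial μ c) = monomial μ c := by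
            rw [hφ, aeval_monomial]
            have : (μ.prod fun i k => (if i ∈ C then 0 else X i : MvPolynomial V K) ^ k)
                = μ.prod fun i k => (X i : MvPolynomial V K) ^ k := by
              apply Finsupp.prod_congr
              intro i hi
              rw [if_neg (fun hiC => Finsupp.mem_support_iff.1 hi (hex i hiC))]
            rw [this, monomial_eq]
            rfl
          rw [this, zero_add]
      | add p q ihp ihq =>
        obtain ⟨p₁, hp₁, hpe⟩ := ihp
        obtain ⟨q₁, hq₁, hqe⟩ := ihq
        refine ⟨p₁ + q₁, Ideal.add_mem _ hp₁ hq₁, ?_⟩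
        rw [map_add]
        conv_lhs => rw [hpe, hqe]
        ring
    apply le_antisymm
    · rw [Ideal.span_le]
      rintro x ⟨j, hj, rfl⟩
      have : φ (X j) = 0 := by rw [hφ, aeval_X, if_pos hj]
      exact this
    · intro h hh
      have hφh : φ h = 0 := hh
      obtain ⟨p, hp, hpe⟩ := key h
      rw [hφh, add_zero] at hpe
      exact hpe ▸ hp
  rw [hker]
  exact RingHom.ker_isPrime φ.toRingHom

/-! ### Colon ideals and annihilators in the quotient -/

lemma X_mul_X_mem (G : SimpleGraph V) {i j : V} (hij : G.Adj i j) :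
    (X i * X j : MvPolynomial V K) ∈ edgeIdeal K G :=
  Ideal.subset_span (show _ ∈ {m | ∃ i j, G.Adj i j ∧ m = (X i * X j : MvPolynomial V K)}
    from ⟨i, j, hij, rfl⟩)

lemma annihilator_mk_eq_colon (I : Ideal (MvPolynomial V K)) (f : MvPolynomial V K) :
    (Submodule.span (MvPolynomial V K)
        {(Ideal.Quotient.mk I f : MvPolynomial V K ⧸ I)}).annihilator
      = Submodule.colon I (Ideal.span {f}) := by
  ext r
  rw [Submodule.mem_annihilator_span_singleton, Ideal.mem_colon_span_singleton]
  have h1 : r • (Ideal.Quotient.mk I f) = Ideal.Quotient.mk I (r * f) := rfl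
  rw [h1, Ideal.Quotient.eq_zero_iff_mem]

/-! ### From membership of a variable in `(I : g)` to adjacency -/

lemma eq_or_eq_of_single_add_single_pos {a w i : V}
    (h : (Finsupp.single a 1 + Finsupp.single w 1 : V →₀ ℕ) i ≠ 0) : i = a ∨ i = w := by
  classical
  by_contra hc
  push_neg at hc
  rw [Finsupp.add_apply, Finsupp.single_eq_of_ne' (Ne.symm hc.1),
    Finsupp.single_eq_of_ne' (Ne.symm hc.2)] at h
  exact h rfl

lemma adj_of_X_mul_mem (G : SimpleGraph V) {g : MvPolynomial V K} {w a : V}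
    (hgw : coeff (Finsupp.single w 1) g ≠ 0)
    (ha : X a * g ∈ edgeIdeal K G) : G.Adj w a := by
  have hcoeff : coeff (Finsupp.single a 1 + Finsupp.single w 1) (X a * g)
      = coeff (Finsupp.single w 1) g := coeff_X_mul _ _ _
  have hmem : (Finsupp.single a 1 + Finsupp.single w 1) ∈ (X a * g).support :=
    MvPolynomial.mem_support_iff.2 (by rw [hcoeff]; exact hgw)
  obtain ⟨i, j, hij, hle⟩ := support_edgeIdeal G ha _ hmem
  have hi : i = a ∨ i = w := by
    apply eq_or_eq_of_single_add_single_pos (a := a) (w := w) (i := i)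
    have h1 : 1 ≤ (Finsupp.single i 1 + Finsupp.single j 1 : V →₀ ℕ) i := by
      rw [Finsupp.add_apply, Finsupp.single_eq_same]; omega
    have := le_trans h1 (Finsupp.le_def.1 hle i)
    omega
  have hj : j = a ∨ j = w := by
    apply eq_or_eq_of_single_add_single_pos (a := a) (w := w) (i := j)
    have h1 : 1 ≤ (Finsupp.single i 1 + Finsupp.single j 1 : V →₀ ℕ) j := by
      rw [Finsupp.add_apply, Finsupp.single_eq_same]; omega
    have := le_trans h1 (Finsupp.le_def.1 hle j)
    omega
  rcases hi with rfl | rfl <;> rcases hj with rfl | rfl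
  · exact absurd rfl hij.ne
  · exact hij.symm
  · exact hij
  · exact absurd rfl hij.ne

/-! ### The colon ideal computation for the upper bound -/

lemma colon_pow_eq (G : SimpleGraph V) {w y : V} (hwy : G.Adj w y)
    (hcov : ∀ a b, G.Adj a b → G.Adj w a ∨ G.Adj w b) (n : ℕ) :
    Submodule.colon ((edgeIdeal K G) ^ (n + 1))
        (Ideal.span {(monomial (Finsupp.single w (n + 1) + Finsupp.single y n) (1 : K))})
      = Ideal.span ((X : V → MvPolynomial V K) '' {j | G.Adj w j}) := by
  classical
  set af : V →₀ ℕ := Finsupp.single w (n + 1) + Finsupp.single y n with haf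
  have hwy' : w ≠ y := hwy.ne
  apply le_antisymm
  · intro h hh
    rw [Ideal.mem_colon_span_singleton] at hh
    rw [mem_span_X_iff]
    intro μ hμ
    by_contra hno
    push_neg at hno
    have hno' : ∀ j, G.Adj w j → μ j = 0 := fun j hj => hno j hj
    have hcoeff : coeff (μ + af) (h * monomial af 1) = coeff μ h := by
      rw [coeff_mul_monomial, mul_one]
    have hmem : μ + af ∈ (h * monomial af (1 : K)).support :=
      MvPolynomial.mem_support_iff.2
        (by rw [hcoeff]; exact MvPolynomial.mem_support_iff.1 hμ)
    obtain ⟨l, hlen, hadj, hsum⟩ := support_edgeIdeal_pow G (n + 1) _ hh _ hmem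
    set ψ := (l.map fun p : V × V => Finsupp.single p.1 1 + Finsupp.single p.2 1).sum with hψ
    have hafc : ∀ c, c ≠ w → c ≠ y → af c = 0 := by
      intro c hcw hcy
      rw [haf, Finsupp.add_apply, Finsupp.single_eq_of_ne' (Ne.symm hcw),
        Finsupp.single_eq_of_ne' (Ne.symm hcy)]
      rfl
    have hafy : af y = n := by
      rw [haf, Finsupp.add_apply, Finsupp.single_eq_of_ne' hwy', Finsupp.single_eq_same]
      omega
    have key : ∀ p ∈ l, ∀ c, G.Adj w c →
        1 ≤ (Finsupp.single p.1 1 + Finsupp.single p.2 1 : V →₀ ℕ) c →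
        1 ≤ (Finsupp.single p.1 1 + Finsupp.single p.2 1 : V →₀ ℕ) y := by
      intro p hp c hc h1c
      have hep : (Finsupp.single p.1 1 + Finsupp.single p.2 1 : V →₀ ℕ) ≤ ψ :=
        List.single_le_sum (fun x _ => zero_le (a := x)) _
          (List.mem_map_of_mem (f := fun p : V × V => Finsupp.single p.1 1 + Finsupp.single p.2 1) hp)
      by_cases hcy : c = y
      · subst hcy; exact h1c
      · exfalso
        have hψc : 1 ≤ ψ c := le_trans h1c (Finsupp.le_def.1 hep c)
        have h2 : ψ c ≤ μ c + af c := Finsupp.le_def.1 hsum c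
        have hμc : μ c = 0 := hno' c hc
        have hcw : c ≠ w := hc.ne'
        rw [hμc, hafc c hcw hcy] at h2
        omega
    have hy1 : ∀ p ∈ l, 1 ≤ (Finsupp.single p.1 1 + Finsupp.single p.2 1 : V →₀ ℕ) y := by
      intro p hp
      rcases hcov p.1 p.2 (hadj p hp) with hc | hc
      · exact key p hp p.1 hc (by rw [Finsupp.add_apply, Finsupp.single_eq_same]; omega)
      · exact key p hp p.2 hc (by rw [Finsupp.add_apply, Finsupp.single_eq_same]; omega)
    have hψy : ψ y
        = ((l.map fun p : V × V => Finsupp.single p.1 1 + Finsupp.single p.2 1).map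
            fun e : V →₀ ℕ => e y).sum := by
      rw [hψ]
      exact map_list_sum (Finsupp.applyAddHom y) _
    have hge : n + 1 ≤ ψ y := by
      rw [hψy]
      have := List.length_le_sum_of_one_le
        ((l.map fun p : V × V => Finsupp.single p.1 1 + Finsupp.single p.2 1).map
          fun e : V →₀ ℕ => e y)
        (by
          intro i hi
          simp only [List.mem_map] at hi
          obtain ⟨e, ⟨p, hp, rfl⟩, rfl⟩ := hi
          exact hy1 p hp)
      simpa [hlen] using this
    have hle' : ψ y ≤ μ y + af y := Finsupp.le_def.1 hsum y
    have hμy : μ y = 0 := hno' y hwy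
    rw [hμy, hafy] at hle'
    omega
  · rw [Ideal.span_le]
    rintro x ⟨j, hj, rfl⟩
    rw [SetLike.mem_coe, Ideal.mem_colon_span_singleton]
    have hmono : monomial af (1 : K) = X w ^ (n + 1) * X y ^ n := by
      rw [X_pow_eq_monomial, X_pow_eq_monomial, monomial_mul, one_mul]
    have heq : X j * monomial af (1 : K) = (X j * X w) * (X w * X y) ^ n := by
      rw [hmono]; ring
    rw [heq, pow_succ' (edgeIdeal K G) n]
    exact Ideal.mul_mem_mul (X_mul_X_mem G (hj : G.Adj w j).symm)
      (Ideal.pow_mem_pow (X_mul_X_mem G hwy) n)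

/-- The defining set of the v-number. -/
def vSet {σ K : Type*} [Field K] (I : Ideal (MvPolynomial σ K)) : Set ℕ :=
  {k : ℕ | ∃ f : MvPolynomial σ K, f.IsHomogeneous k ∧
    Submodule.colon I (Ideal.span {f}) ∈
      associatedPrimes (MvPolynomial σ K) (MvPolynomial σ K ⧸ I)}

lemma vNumber_eq {σ K : Type*} [Field K] (I : Ideal (MvPolynomial σ K)) :
    vNumber I = sInf (vSet I) := rfl

end VAux

open VAux

/-- if the edge ideal I has v(I) = 1, then v(I^{n+1}) = 2n + 1 for all n ≥ 1. -/
theorem vNumber_pow_edgeIdeal_of_vNumber_one {K : Type*} [Field K] {V : Type*} [Fintype V]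
    (G : SimpleGraph V) (hedge : ∃ u v, G.Adj u v)
    (hv : vNumber (edgeIdeal K G) = 1) :
    ∀ n, 1 ≤ n → vNumber ((edgeIdeal K G) ^ (n + 1)) = 2 * n + 1 := by
  classical
  intro n hn
  -- Step 1: extract a linear witness from `v(I) = 1`
  have hne : (vSet (edgeIdeal K G)).Nonempty := by
    by_contra h
    rw [Set.not_nonempty_iff_eq_empty] at h
    rw [vNumber_eq, h, Nat.sInf_empty] at hv
    omega
  have h1 : 1 ∈ vSet (edgeIdeal K G) := by
    have := Nat.sInf_mem hne
    rwa [← vNumber_eq, hv] at this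
  obtain ⟨g, hg1, hgass⟩ := h1
  have hPprime : (Submodule.colon (edgeIdeal K G) (Ideal.span {g})).IsPrime :=
    hgass.isPrime
  have hg0 : g ≠ 0 := by
    rintro rfl
    have h1' : (1 : MvPolynomial V K) ∈ Submodule.colon (edgeIdeal K G) (Ideal.span {(0 : MvPolynomial V K)}) := by
      rw [Ideal.mem_colon_span_singleton, mul_zero]
      exact Ideal.zero_mem _
    exact hPprime.ne_top ((Ideal.eq_top_iff_one _).2 h1')
  obtain ⟨μ0, hμ0⟩ := MvPolynomial.support_nonempty.2 hg0
  have hdeg1 : μ0.degree = 1 := by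
    rw [Finsupp.degree_eq_weight_one]
    exact hg1 (MvPolynomial.mem_support_iff.1 hμ0)
  obtain ⟨w, hw⟩ := degree_eq_one hdeg1
  have hgw : coeff (Finsupp.single w 1) g ≠ 0 := by
    rw [← hw]
    exact MvPolynomial.mem_support_iff.1 hμ0
  have hIP : edgeIdeal K G ≤ Submodule.colon (edgeIdeal K G) (Ideal.span {g}) := by
    intro i hi
    rw [Ideal.mem_colon_span_singleton]
    exact Ideal.mul_mem_right _ _ hi
  -- Step 2: the neighborhood of `w` is a vertex cover
  have hcov : ∀ a b, G.Adj a b → G.Adj w a ∨ G.Adj w b := by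
    intro a b hab
    have hedgeP : X a * X b ∈ Submodule.colon (edgeIdeal K G) (Ideal.span {g}) :=
      hIP (X_mul_X_mem G hab)
    rcases hPprime.mem_or_mem hedgeP with hXa | hXb
    · left
      rw [Ideal.mem_colon_span_singleton] at hXa
      exact adj_of_X_mul_mem G hgw hXa
    · right
      rw [Ideal.mem_colon_span_singleton] at hXb
      exact adj_of_X_mul_mem G hgw hXb
  obtain ⟨a0, b0, hab0⟩ := hedge
  obtain ⟨y, hwy⟩ : ∃ y, G.Adj w y := by
    rcases hcov a0 b0 hab0 with h | h
    exacts [⟨a0, h⟩, ⟨b0, h⟩]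
  -- Step 3: the upper bound witness
  have hafdeg : (Finsupp.single w (n + 1) + Finsupp.single y n).degree = 2 * n + 1 := by
    rw [degree_add, degree_single, degree_single]
    omega
  have hhom : (monomial (Finsupp.single w (n + 1) + Finsupp.single y n) (1 : K)).IsHomogeneous
      (2 * n + 1) := isHomogeneous_monomial 1 hafdeg
  have hcolon := colon_pow_eq (K := K) G hwy hcov n
  have hass' : Submodule.colon ((edgeIdeal K G) ^ (n + 1))
      (Ideal.span {monomial (Finsupp.single w (n + 1) + Finsupp.single y n) (1 : K)}) ∈
      associatedPrimes (MvPolynomial V K) (MvPolynomial V K ⧸ (edgeIdeal K G) ^ (n + 1)) := by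
    rw [AssociatedPrimes.mem_iff, isAssociatedPrime_iff]
    constructor
    · rw [hcolon]
      exact span_X_isPrime _
    · exact ⟨Ideal.Quotient.mk _ (monomial (Finsupp.single w (n + 1) + Finsupp.single y n) (1 : K)),
        (annihilator_mk_eq_colon _ _).symm.trans (by
          ext r; simp [Submodule.mem_annihilator_span_singleton, Submodule.mem_colon_singleton])⟩
  have hub : 2 * n + 1 ∈ vSet ((edgeIdeal K G) ^ (n + 1)) :=
    ⟨monomial (Finsupp.single w (n + 1) + Finsupp.single y n) (1 : K), hhom, hass'⟩
  -- Step 4: the lower bound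
  have hlb : ∀ k ∈ vSet ((edgeIdeal K G) ^ (n + 1)), 2 * n + 1 ≤ k := by
    rintro k ⟨f, hfhom, hfass⟩
    have hfprime : (Submodule.colon ((edgeIdeal K G) ^ (n + 1)) (Ideal.span {f})).IsPrime :=
      hfass.isPrime
    have hf0 : f ≠ 0 := by
      rintro rfl
      have h1' : (1 : MvPolynomial V K) ∈ Submodule.colon ((edgeIdeal K G) ^ (n + 1))
          (Ideal.span {(0 : MvPolynomial V K)}) := by
        rw [Ideal.mem_colon_span_singleton, mul_zero]
        exact Ideal.zero_mem _
      exact hfprime.ne_top ((Ideal.eq_top_iff_one _).2 h1')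
    have hpow : (edgeIdeal K G) ^ (n + 1) ≤
        Submodule.colon ((edgeIdeal K G) ^ (n + 1)) (Ideal.span {f}) := by
      intro r hr
      rw [Ideal.mem_colon_span_singleton]
      exact Ideal.mul_mem_right _ _ hr
    have hXmem : X a0 * X b0 ∈ Submodule.colon ((edgeIdeal K G) ^ (n + 1)) (Ideal.span {f}) :=
      hfprime.mem_of_pow_mem (n + 1) (hpow (Ideal.pow_mem_pow (X_mul_X_mem G hab0) (n + 1)))
    have hu : ∃ u, X u ∈ Submodule.colon ((edgeIdeal K G) ^ (n + 1)) (Ideal.span {f}) := by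
      rcases hfprime.mem_or_mem hXmem with h | h
      exacts [⟨a0, h⟩, ⟨b0, h⟩]
    obtain ⟨u, hu⟩ := hu
    rw [Ideal.mem_colon_span_singleton] at hu
    have hne0 : X u * f ≠ 0 := mul_ne_zero (MvPolynomial.X_ne_zero u) hf0
    have hld := totalDegree_ge_of_mem_pow G hu hne0
    have hud : (X u * f).totalDegree ≤ 1 + k := by
      calc (X u * f).totalDegree ≤ (X (R := K) u).totalDegree + f.totalDegree :=
            totalDegree_mul _ _
        _ = 1 + k := by rw [totalDegree_X, hfhom.totalDegree hf0]
    omega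
  have hne' : (vSet ((edgeIdeal K G) ^ (n + 1))).Nonempty := ⟨_, hub⟩
  rw [vNumber_eq]
  exact le_antisymm (Nat.sInf_le hub) (hlb _ (Nat.sInf_mem hne'))
end
end

section
/- Let I ⊆ S = K[x,y,z,…] (t ≥ 2 variables) and fix a field K. For every positive integer n there exists an 𝔪-primary monomial ideal I ⊆ S = K[x_1,…,x_t] such that reg(S/I) − v(I) = n, where, since dim(S/I) = 0, reg(S/I) equals the largest integer k such that the degree-k graded component of S/I is nonzero (equivalently, the largest degree of a monomial of S not belonging to I). -/
open MvPolynomial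

noncomputable section

/-- for every n ≥ 1 there is an 𝔪-primary monomial ideal with
reg(S/I) - v(I) = n, where reg(S/I) is the largest degree of a monomial not in I. -/
theorem exists_m_primary_reg_sub_vNumber {K : Type*} [Field K] (t : ℕ) (ht : 2 ≤ t)
    (n : ℕ) (hn : 0 < n) :
    ∃ I : Ideal (MvPolynomial (Fin t) K),
      IsMonomialIdeal I ∧ I.radical = maxIdeal K (Fin t) ∧
      sSup {k : ℕ | ∃ a : Fin t →₀ ℕ, monomial a (1 : K) ∉ I ∧ (∑ i, a i) = k} - vNumber I
        = n := by
  classical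
  set i0 : Fin t := ⟨0, by omega⟩ with hi0
  set i1 : Fin t := ⟨1, by omega⟩ with hi1
  have hne : i0 ≠ i1 := by simp [hi0, hi1, Fin.ext_iff]
  set A : Set (Fin t →₀ ℕ) :=
    {Finsupp.single i0 2, Finsupp.single i0 1 + Finsupp.single i1 1,
      Finsupp.single i1 (n + 2)} ∪ {d | ∃ i : Fin t, 2 ≤ (i : ℕ) ∧ d = Finsupp.single i 1}
    with hA
  set I : Ideal (MvPolynomial (Fin t) K) :=
    Ideal.span ((fun a => (monomial a (1 : K))) '' A) with hI
  have hAmem : ∀ s : Fin t →₀ ℕ, s ∈ A ↔ s = Finsupp.single i0 2 ∨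
      s = Finsupp.single i0 1 + Finsupp.single i1 1 ∨ s = Finsupp.single i1 (n + 2) ∨
      ∃ i : Fin t, 2 ≤ (i : ℕ) ∧ s = Finsupp.single i 1 := by
    intro s
    simp only [hA, Set.mem_union, Set.mem_insert_iff, Set.mem_singleton_iff,
      Set.mem_setOf_eq, or_assoc]
  -- membership criterion for monomials
  have hmono : ∀ a : Fin t →₀ ℕ, monomial a (1 : K) ∈ I ↔ ∃ s ∈ A, s ≤ a := by
    intro a
    rw [hI, mem_ideal_span_monomial_image]
    constructor
    · intro h
      exact h a (by simp [support_monomial])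
    · rintro ⟨s, hs, hsa⟩ xi hxi
      rw [support_monomial, if_neg one_ne_zero, Finset.mem_singleton] at hxi
      subst hxi
      exact ⟨s, hs, hsa⟩
  have hgen : ∀ a ∈ A, monomial a (1 : K) ∈ I := fun a ha =>
    (hmono a).2 ⟨a, ha, le_refl a⟩
  -- nonmembership of y^m for m ≤ n+1
  have hnotmem : ∀ m : ℕ, m ≤ n + 1 → monomial (Finsupp.single i1 m) (1 : K) ∉ I := by
    intro m hm h
    obtain ⟨s, hs, hle⟩ := (hmono _).1 h
    rw [Finsupp.le_def] at hle
    rcases (hAmem s).1 hs with rfl | rfl | rfl | ⟨i, hi2, rfl⟩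
    · have := hle i0
      simp [Finsupp.single_apply, hne, hne.symm] at this
    · have := hle i0
      simp [Finsupp.add_apply, Finsupp.single_apply, hne, hne.symm] at this
    · have := hle i1
      simp only [Finsupp.single_eq_same] at this
      omega
    · have := hle i
      have hii : i ≠ i1 := by
        intro h; rw [h] at hi2; simp [hi1] at hi2
      simp [Finsupp.single_apply, Ne.symm hii] at this
  have hx0 : monomial (Finsupp.single i0 1) (1 : K) ∉ I := by
    intro h
    obtain ⟨s, hs, hle⟩ := (hmono _).1 h
    rw [Finsupp.le_def] at hle
    rcases (hAmem s).1 hs with rfl | rfl | rfl | ⟨i, hi2, rfl⟩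
    · have := hle i0
      simp [Finsupp.single_apply] at this
    · have := hle i1
      simp [Finsupp.add_apply, Finsupp.single_apply, hne, hne.symm] at this
    · have := hle i1
      simp [Finsupp.single_apply, hne, hne.symm] at this
    · have := hle i
      have hii : i ≠ i0 := by
        intro h; rw [h] at hi2; simp [hi0] at hi2
      simp [Finsupp.single_apply, Ne.symm hii] at this
  -- every monomial of degree > n+1 is in I
  have hbig : ∀ a : Fin t →₀ ℕ, n + 1 < ∑ i, a i → monomial a (1 : K) ∈ I := by
    intro a ha
    rw [hmono]
    by_cases hhigh : ∃ i : Fin t, 2 ≤ (i : ℕ) ∧ a i ≠ 0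
    · obtain ⟨i, hi2, hai⟩ := hhigh
      refine ⟨Finsupp.single i 1, (hAmem _).2 (Or.inr (Or.inr (Or.inr ⟨i, hi2, rfl⟩))), ?_⟩
      rw [Finsupp.le_def]
      intro j
      rcases eq_or_ne i j with rfl | hij
      · rw [Finsupp.single_eq_same]
        omega
      · rw [Finsupp.single_eq_of_ne' hij]
        exact Nat.zero_le _
    · push_neg at hhigh
      have hsum : ∑ i, a i = a i0 + a i1 := by
        rw [← Finset.sum_pair hne]
        symm
        apply Finset.sum_subset (Finset.subset_univ _)
        intro x _ hx
        simp only [Finset.mem_insert, Finset.mem_singleton] at hx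
        push_neg at hx
        apply hhigh
        have h0 : (x : ℕ) ≠ 0 := fun h => hx.1 (Fin.ext (by simp [h, hi0]))
        have h1 : (x : ℕ) ≠ 1 := fun h => hx.2 (Fin.ext (by simp [h, hi1]))
        omega
      rcases Nat.lt_or_ge (a i0) 1 with h0 | h0
      · -- a i0 = 0, so a i1 ≥ n+2
        refine ⟨Finsupp.single i1 (n + 2), (hAmem _).2 (Or.inr (Or.inr (Or.inl rfl))), ?_⟩
        rw [Finsupp.le_def]
        intro j
        rcases eq_or_ne i1 j with rfl | hij
        · rw [Finsupp.single_eq_same]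
          omega
        · rw [Finsupp.single_eq_of_ne' hij]
          exact Nat.zero_le _
      rcases Nat.lt_or_ge (a i0) 2 with h2 | h2
      · -- a i0 = 1
        refine ⟨Finsupp.single i0 1 + Finsupp.single i1 1, (hAmem _).2 (Or.inr (Or.inl rfl)), ?_⟩
        rw [Finsupp.le_def]
        intro j
        rw [Finsupp.add_apply]
        rcases eq_or_ne i0 j with rfl | hj0
        · rw [Finsupp.single_eq_same, Finsupp.single_eq_of_ne' (Ne.symm hne)]
          omega
        · rw [Finsupp.single_eq_of_ne' hj0]
          rcases eq_or_ne i1 j with rfl | hj1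
          · rw [Finsupp.single_eq_same]
            omega
          · rw [Finsupp.single_eq_of_ne' hj1]
            exact Nat.zero_le _
      · -- a i0 ≥ 2
        refine ⟨Finsupp.single i0 2, (hAmem _).2 (Or.inl rfl), ?_⟩
        rw [Finsupp.le_def]
        intro j
        rcases eq_or_ne i0 j with rfl | hij
        · rw [Finsupp.single_eq_same]
          omega
        · rw [Finsupp.single_eq_of_ne' hij]
          exact Nat.zero_le _
  -- maxIdeal is the kernel of constantCoeff, hence maximal
  have hker : maxIdeal K (Fin t) = RingHom.ker
      (constantCoeff : MvPolynomial (Fin t) K →+* K) := by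
    unfold maxIdeal
    ext p
    rw [← Set.image_univ, mem_ideal_span_X_image, RingHom.mem_ker]
    rw [show (constantCoeff : MvPolynomial (Fin t) K →+* K) p = coeff 0 p from rfl]
    constructor
    · intro h
      by_contra hc
      obtain ⟨i, _, hi⟩ := h 0 (mem_support_iff.2 hc)
      simp at hi
    · intro h m hm
      by_contra hall
      push_neg at hall
      have : m = 0 := by
        ext i; simpa using hall i (Set.mem_univ i)
      rw [this] at hm
      exact mem_support_iff.1 hm h
  have hCsurj : Function.Surjective (constantCoeff : MvPolynomial (Fin t) K →+* K) :=
    fun r => ⟨C r, constantCoeff_C _ r⟩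
  have hmax : (maxIdeal K (Fin t)).IsMaximal := by
    rw [hker]; exact RingHom.ker_isMaximal_of_surjective _ hCsurj
  -- I ⊆ maxIdeal
  have hIle : I ≤ maxIdeal K (Fin t) := by
    rw [hI, Ideal.span_le]
    rintro p ⟨a, ha, rfl⟩
    rw [SetLike.mem_coe, hker, RingHom.mem_ker,
      show (constantCoeff : MvPolynomial (Fin t) K →+* K) (monomial a 1) =
        coeff 0 (monomial a 1) from rfl, coeff_monomial]
    have ha0 : a ≠ 0 := by
      rcases (hAmem a).1 ha with rfl | rfl | rfl | ⟨i, _, rfl⟩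
      · exact fun h => by simpa using Finsupp.single_eq_zero.1 h
      · intro h
        have := DFunLike.congr_fun h i0
        simp [Finsupp.add_apply, Finsupp.single_apply, hne, hne.symm] at this
      · exact fun h => by simpa using Finsupp.single_eq_zero.1 h
      · exact fun h => by simpa using Finsupp.single_eq_zero.1 h
    rw [if_neg ha0]
  -- radical I = maxIdeal
  have hXdef : ∀ i : Fin t, (X i : MvPolynomial (Fin t) K)
      = monomial (Finsupp.single i 1) 1 := fun _ => rfl
  have hXmem : ∀ i : Fin t, ∃ k : ℕ, (X i : MvPolynomial (Fin t) K) ^ k ∈ I := by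
    intro i
    by_cases h0 : i = i0
    · exact ⟨2, by rw [h0, X_pow_eq_monomial]; exact hgen _ ((hAmem _).2 (Or.inl rfl))⟩
    by_cases h1 : i = i1
    · exact ⟨n + 2, by
        rw [h1, X_pow_eq_monomial]
        exact hgen _ ((hAmem _).2 (Or.inr (Or.inr (Or.inl rfl))))⟩
    have hi2 : 2 ≤ (i : ℕ) := by
      have hh0 : (i : ℕ) ≠ 0 := fun h => h0 (Fin.ext (by simp [h, hi0]))
      have hh1 : (i : ℕ) ≠ 1 := fun h => h1 (Fin.ext (by simp [h, hi1]))
      omega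
    exact ⟨1, by
      rw [pow_one, hXdef]
      exact hgen _ ((hAmem _).2 (Or.inr (Or.inr (Or.inr ⟨i, hi2, rfl⟩))))⟩
  have hrad : I.radical = maxIdeal K (Fin t) := by
    apply le_antisymm
    · calc I.radical ≤ (maxIdeal K (Fin t)).radical := Ideal.radical_mono hIle
        _ = maxIdeal K (Fin t) := hmax.isPrime.radical
    · unfold maxIdeal
      rw [Ideal.span_le]
      rintro p ⟨i, rfl⟩
      exact Ideal.mem_radical_iff.2 (hXmem i)
  -- x*y ∈ I
  have hXY : (X i0 : MvPolynomial (Fin t) K) * X i1 ∈ I := by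
    rw [hXdef, hXdef, monomial_mul, one_mul]
    exact hgen _ ((hAmem _).2 (Or.inr (Or.inl rfl)))
  -- colon I (X i0) = maxIdeal
  have hcolon : Submodule.colon I (Ideal.span {(X i0 : MvPolynomial (Fin t) K)})
      = maxIdeal K (Fin t) := by
    have hle : maxIdeal K (Fin t) ≤
        Submodule.colon I (Ideal.span {(X i0 : MvPolynomial (Fin t) K)}) := by
      unfold maxIdeal
      rw [Ideal.span_le]
      rintro p ⟨i, rfl⟩
      rw [SetLike.mem_coe, Ideal.mem_colon_span_singleton]
      by_cases h0 : i = i0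
      · rw [h0, ← sq, X_pow_eq_monomial]
        exact hgen _ ((hAmem _).2 (Or.inl rfl))
      by_cases h1 : i = i1
      · rw [h1, mul_comm]
        exact hXY
      have hi2 : 2 ≤ (i : ℕ) := by
        have hh0 : (i : ℕ) ≠ 0 := fun h => h0 (Fin.ext (by simp [h, hi0]))
        have hh1 : (i : ℕ) ≠ 1 := fun h => h1 (Fin.ext (by simp [h, hi1]))
        omega
      refine Ideal.mul_mem_right _ _ ?_
      rw [hXdef]
      exact hgen _ ((hAmem _).2 (Or.inr (Or.inr (Or.inr ⟨i, hi2, rfl⟩))))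
    have hneTop : Submodule.colon I (Ideal.span {(X i0 : MvPolynomial (Fin t) K)}) ≠ ⊤ := by
      intro h
      have h1 : (1 : MvPolynomial (Fin t) K) ∈
          Submodule.colon I (Ideal.span {(X i0 : MvPolynomial (Fin t) K)}) := by
        rw [h]; trivial
      rw [Ideal.mem_colon_span_singleton, one_mul] at h1
      exact hx0 (by rwa [hXdef] at h1)
    exact (hmax.eq_of_le hneTop hle).symm
  have hXnotmem : (X i0 : MvPolynomial (Fin t) K) ∉ I := by rw [hXdef]; exact hx0
  have hYnotmem : (X i1 : MvPolynomial (Fin t) K) ∉ I := by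
    rw [hXdef]; exact hnotmem 1 (by omega)
  have hInotPrime : ¬ I.IsPrime := by
    intro h
    rcases h.mem_or_mem hXY with h' | h'
    · exact hXnotmem h'
    · exact hYnotmem h'
  -- vNumber I = 1
  have hv : vNumber I = 1 := by
    have h1mem : 1 ∈ {k : ℕ | ∃ f : MvPolynomial (Fin t) K, f.IsHomogeneous k ∧
        Submodule.colon I (Ideal.span {f}) ∈
          associatedPrimes (MvPolynomial (Fin t) K) (MvPolynomial (Fin t) K ⧸ I)} := by
      refine ⟨X i0, isHomogeneous_X _ _, ?_⟩
      rw [hcolon]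
      refine ⟨hmax.isPrime, Ideal.Quotient.mk I (X i0), ?_⟩
      rw [← hcolon]
      suffices hs : Submodule.colon I ↑(Ideal.span {(X i0 : MvPolynomial (Fin t) K)}) =
          (⊥ : Submodule (MvPolynomial (Fin t) K) (MvPolynomial (Fin t) K ⧸ I)).colon
            {Ideal.Quotient.mk I (X i0)} by
        rw [← hs, hcolon, hmax.isPrime.radical]
      ext r
      rw [Ideal.mem_colon_span_singleton,
        Submodule.mem_colon_singleton, Submodule.mem_bot,
        show r • (Ideal.Quotient.mk I) (X i0) = (Ideal.Quotient.mk I) (r * X i0) from rfl,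
        Ideal.Quotient.eq_zero_iff_mem]
    have h0not : 0 ∉ {k : ℕ | ∃ f : MvPolynomial (Fin t) K, f.IsHomogeneous k ∧
        Submodule.colon I (Ideal.span {f}) ∈
          associatedPrimes (MvPolynomial (Fin t) K) (MvPolynomial (Fin t) K ⧸ I)} := by
      rintro ⟨f, hf, hass⟩
      have hdeg := (totalDegree_eq_zero_iff (Fin t) f).1
        ((totalDegree_zero_iff_isHomogeneous (Fin t)).2 hf)
      have hfC : f = C (coeff 0 f) := by
        ext m
        rw [coeff_C]
        split_ifs with h
        · rw [← h]
        · by_contra hcne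
          have h0 := hdeg m (mem_support_iff.2 hcne)
          apply h
          ext i
          simp [h0 i]
      by_cases hc : coeff 0 f = 0
      · rw [hfC, hc, map_zero] at hass
        have hTop : Submodule.colon I (Ideal.span {(0 : MvPolynomial (Fin t) K)}) = ⊤ := by
          rw [eq_top_iff]
          intro r _
          rw [Submodule.mem_colon]
          intro p hp
          rw [Ideal.span_singleton_eq_bot.2 rfl] at hp
          rw [Ideal.mem_bot.1 hp, smul_zero]
          exact I.zero_mem
        rw [hTop] at hass
        exact hass.isPrime.ne_top rfl
      · have hu : IsUnit f := by
          rw [hfC]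
          exact (isUnit_iff_ne_zero.2 hc).map C
        rw [Ideal.span_singleton_eq_top.2 hu, Submodule.top_coe, Submodule.colon_univ] at hass
        exact hInotPrime hass.isPrime
    unfold vNumber
    apply le_antisymm (Nat.sInf_le h1mem)
    rcases Nat.eq_zero_or_pos (sInf {k : ℕ | ∃ f : MvPolynomial (Fin t) K,
        f.IsHomogeneous k ∧ Submodule.colon I (Ideal.span {f}) ∈
          associatedPrimes (MvPolynomial (Fin t) K) (MvPolynomial (Fin t) K ⧸ I)}) with h | h
    · exfalso
      rcases (Nat.sInf_eq_zero.1 h) with h' | h'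
      · exact h0not h'
      · rw [h'] at h1mem; exact h1mem
    · exact h
  -- sSup = n + 1
  have hsum1 : (∑ i, (Finsupp.single i1 (n + 1) : Fin t →₀ ℕ) i) = n + 1 := by
    simp only [Finsupp.single_apply, Finset.sum_ite_eq, Finset.mem_univ, if_true]
  have hsup : sSup {k : ℕ | ∃ a : Fin t →₀ ℕ, monomial a (1 : K) ∉ I ∧ (∑ i, a i) = k}
      = n + 1 := by
    have hub : ∀ k ∈ {k : ℕ | ∃ a : Fin t →₀ ℕ, monomial a (1 : K) ∉ I ∧ (∑ i, a i) = k},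
        k ≤ n + 1 := by
      rintro k ⟨a, hna, rfl⟩
      by_contra hk
      exact hna (hbig a (by omega))
    have hmem : n + 1 ∈ {k : ℕ | ∃ a : Fin t →₀ ℕ, monomial a (1 : K) ∉ I ∧ (∑ i, a i) = k} :=
      ⟨Finsupp.single i1 (n + 1), hnotmem (n + 1) le_rfl, hsum1⟩
    exact le_antisymm (csSup_le ⟨n + 1, hmem⟩ hub) (le_csSup ⟨n + 1, hub⟩ hmem)
  exact ⟨I, ⟨A, hI⟩, hrad, by rw [hsup, hv]; omega⟩
end
end

section
/- Let I = I(C_5) ⊆ K[a,b,c,d,e] be the edge ideal of the 5-cycle C_5 with edges ab, bc, cd, de, ea. Then v(I^{n+1}) = 2n + 1 for all n ≥ 1. -/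
open MvPolynomial

noncomputable section

namespace C5Aux

open Finsupp

variable {K : Type*} [Field K]

lemma adj01 : (SimpleGraph.cycleGraph 5).Adj 0 1 := by decide
lemma adj12 : (SimpleGraph.cycleGraph 5).Adj 1 2 := by decide
lemma adj23 : (SimpleGraph.cycleGraph 5).Adj 2 3 := by decide
lemma adj34 : (SimpleGraph.cycleGraph 5).Adj 3 4 := by decide
lemma adj40 : (SimpleGraph.cycleGraph 5).Adj 4 0 := by decide

/-- Exponent vectors of the edge generators of `I(C_5)`. -/
def edgeSet : Set (Fin 5 →₀ ℕ) :=
  {e | ∃ i j : Fin 5, (SimpleGraph.cycleGraph 5).Adj i j ∧ e = single i 1 + single j 1}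

/-- Sums of `k` edge exponent vectors. -/
def sumSet (k : ℕ) : Set (Fin 5 →₀ ℕ) :=
  {s | ∃ l : List (Fin 5 →₀ ℕ), (∀ e ∈ l, e ∈ edgeSet) ∧ l.length = k ∧ l.sum = s}

lemma edgeIdeal_eq :
    edgeIdeal K (SimpleGraph.cycleGraph 5) =
      Ideal.span ((fun a => monomial a (1 : K)) '' edgeSet) := by
  unfold edgeIdeal
  congr 1
  ext m
  constructor
  · rintro ⟨i, j, h, rfl⟩
    exact ⟨single i 1 + single j 1, ⟨i, j, h, rfl⟩, by simp [X, monomial_mul]⟩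
  · rintro ⟨e, ⟨i, j, h, rfl⟩, rfl⟩
    exact ⟨i, j, h, by simp [X, monomial_mul]⟩

lemma sumSet_add {a b : Fin 5 →₀ ℕ} {j k : ℕ} (ha : a ∈ sumSet j) (hb : b ∈ sumSet k) :
    a + b ∈ sumSet (j + k) := by
  obtain ⟨l1, h1, hl1, rfl⟩ := ha
  obtain ⟨l2, h2, hl2, rfl⟩ := hb
  exact ⟨l1 ++ l2, fun e he => (List.mem_append.mp he).elim (h1 e) (h2 e),
    by simp [hl1, hl2], by simp⟩

lemma one_le_span :
    edgeIdeal K (SimpleGraph.cycleGraph 5) ≤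
      Ideal.span ((fun a => monomial a (1 : K)) '' sumSet 1) := by
  rw [edgeIdeal_eq]
  apply Ideal.span_mono
  apply Set.image_mono
  rintro e he
  exact ⟨[e], by simpa using he, rfl, by simp⟩

lemma pow_le_span (k : ℕ) :
    (edgeIdeal K (SimpleGraph.cycleGraph 5)) ^ (k + 1) ≤
      Ideal.span ((fun a => monomial a (1 : K)) '' sumSet (k + 1)) := by
  induction k with
  | zero => rw [pow_one]; exact one_le_span
  | succ k ih =>
    rw [pow_succ]
    calc (edgeIdeal K (SimpleGraph.cycleGraph 5)) ^ (k+1) * edgeIdeal K (SimpleGraph.cycleGraph 5)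
        ≤ Ideal.span ((fun a => monomial a (1 : K)) '' sumSet (k + 1)) *
          Ideal.span ((fun a => monomial a (1 : K)) '' sumSet 1) :=
          Ideal.mul_mono ih one_le_span
      _ ≤ Ideal.span ((fun a => monomial a (1 : K)) '' sumSet (k + 2)) := by
          rw [Ideal.span_mul_span]
          apply Ideal.span_le.mpr
          rintro x hx
          rw [Set.mem_mul] at hx
          obtain ⟨_, ⟨a, ha, rfl⟩, _, ⟨b, hb, rfl⟩, hx⟩ := hx
          subst hx
          rw [monomial_mul, one_mul]
          exact Ideal.subset_span ⟨a + b, sumSet_add (j := k+1) (k := 1) ha hb, rfl⟩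

lemma list_sum_apply (l : List (Fin 5 →₀ ℕ)) (i : Fin 5) :
    l.sum i = (l.map (fun e => e i)).sum :=
  map_list_sum (Finsupp.applyAddHom i) l

lemma adj_cases {i j : Fin 5} (h : (SimpleGraph.cycleGraph 5).Adj i j) :
    (i = 0 ∧ j = 1) ∨ (i = 1 ∧ j = 0) ∨ (i = 1 ∧ j = 2) ∨ (i = 2 ∧ j = 1) ∨
    (i = 2 ∧ j = 3) ∨ (i = 3 ∧ j = 2) ∨ (i = 3 ∧ j = 4) ∨ (i = 4 ∧ j = 3) ∨
    (i = 4 ∧ j = 0) ∨ (i = 0 ∧ j = 4) := by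
  revert h; revert i j; decide

lemma edge_three {e : Fin 5 →₀ ℕ} (he : e ∈ edgeSet) (h0 : e 0 = 0) (h1 : e 1 = 0) :
    e 3 = 1 := by
  obtain ⟨i, j, h, rfl⟩ := he
  rcases adj_cases h with ⟨rfl, rfl⟩|⟨rfl, rfl⟩|⟨rfl, rfl⟩|⟨rfl, rfl⟩|⟨rfl, rfl⟩|⟨rfl, rfl⟩|
    ⟨rfl, rfl⟩|⟨rfl, rfl⟩|⟨rfl, rfl⟩|⟨rfl, rfl⟩ <;>
    simp_all [Finsupp.single_apply]

lemma edge_deg (e : Fin 5 →₀ ℕ) (he : e ∈ edgeSet) : ∑ i : Fin 5, e i = 2 := by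
  obtain ⟨i, j, h, rfl⟩ := he
  simp [Finsupp.single_apply, Finset.sum_add_distrib]

/-- Exponent vector of the witness monomial `x₃ (x₄ x₅)ⁿ`. -/
def gexp (n : ℕ) : Fin 5 →₀ ℕ := single 2 1 + n • (single 3 1 + single 4 1)

lemma gexp_apply (n : ℕ) : gexp n 0 = 0 ∧ gexp n 1 = 0 ∧ gexp n 3 = n := by
  simp [gexp, Finsupp.single_apply]

/-- Key combinatorial fact: no monomial supported away from `{0,1,3}` multiplies the witness
monomial into `I(C₅)^{n+1}`. -/
lemma keyA {n : ℕ} {s m : Fin 5 →₀ ℕ} (hs : s ∈ sumSet (n + 1))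
    (h0 : m 0 = 0) (h1 : m 1 = 0) (h3 : m 3 = 0)
    (hle : s ≤ m + gexp n) : False := by
  obtain ⟨l, hl, hlen, rfl⟩ := hs
  obtain ⟨g0, g1, g3⟩ := gexp_apply n
  have hle' := Finsupp.le_def.mp hle
  have key : ∀ i : Fin 5, l.sum i = 0 → ∀ e ∈ l, e i = 0 := by
    intro i hi e he
    have := List.single_le_sum (l := l.map (fun e => e i)) (by simp) (e i)
      (List.mem_map.mpr ⟨e, he, rfl⟩)
    rw [← list_sum_apply, hi] at this
    omega
  have hs0 : l.sum 0 = 0 := by have := hle' 0; simp [h0, g0] at this; omega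
  have hs1 : l.sum 1 = 0 := by have := hle' 1; simp [h1, g1] at this; omega
  have h3' : ∀ e ∈ l, e 3 = 1 := fun e he =>
    edge_three (hl e he) (key 0 hs0 e he) (key 1 hs1 e he)
  have : l.length ≤ l.sum 3 := by
    rw [list_sum_apply]
    have := List.length_le_sum_of_one_le (l.map (fun e => e 3)) (by
      intro x hx
      obtain ⟨e, he, rfl⟩ := List.mem_map.mp hx
      rw [h3' e he])
    rwa [List.length_map] at this
  have h4 := hle' 3
  rw [Finsupp.add_apply, h3, g3, zero_add] at h4
  omega

lemma sumSet_deg {n : ℕ} {s : Fin 5 →₀ ℕ} (hs : s ∈ sumSet n) :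
    ∑ i : Fin 5, s i = 2 * n := by
  obtain ⟨l, hl, rfl, rfl⟩ := hs
  induction l with
  | nil => simp
  | cons a t ih =>
    have ha := edge_deg a (hl a (by simp))
    have := ih (fun e he => hl e (by simp [he]))
    simp only [List.sum_cons, Finsupp.add_apply, Finset.sum_add_distrib, ha, this,
      List.length_cons]
    ring

/-- The associated prime `(x₁, x₂, x₄)`. -/
def P (K : Type*) [Field K] : Ideal (MvPolynomial (Fin 5) K) :=
  Ideal.span (X '' ({0, 1, 3} : Set (Fin 5)))

def phi (K : Type*) [Field K] : MvPolynomial (Fin 5) K →ₐ[K] MvPolynomial (Fin 5) K :=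
  aeval (fun i => if i = 0 ∨ i = 1 ∨ i = 3 then 0 else X i)

lemma P_le_ker : P K ≤ RingHom.ker (phi K) := by
  rw [P, Ideal.span_le]
  rintro x ⟨i, hi, rfl⟩
  have : phi K (X i) = 0 := by
    rw [phi, aeval_X]
    rcases hi with rfl | rfl | rfl <;> simp
  simpa [RingHom.mem_ker] using this

lemma ker_le_P : RingHom.ker (phi K) ≤ P K := by
  intro p hp
  rw [RingHom.mem_ker] at hp
  classical
  set t := p.support.filter (fun m => ∃ i ∈ ({0, 1, 3} : Set (Fin 5)), m i ≠ 0) with ht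
  have hsplit := Finset.sum_filter_add_sum_filter_not p.support
    (fun m => ∃ i ∈ ({0, 1, 3} : Set (Fin 5)), m i ≠ 0)
    (fun m => monomial m (coeff m p))
  have hp_eq : p = ∑ m ∈ t, monomial m (coeff m p) +
      ∑ m ∈ p.support.filter (fun m => ¬ ∃ i ∈ ({0, 1, 3} : Set (Fin 5)), m i ≠ 0),
        monomial m (coeff m p) := by
    rw [ht, hsplit]; exact (as_sum p)
  have h1 : (∑ m ∈ t, monomial m (coeff m p)) ∈ P K := by
    apply Ideal.sum_mem
    intro m hm
    rw [ht, Finset.mem_filter] at hm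
    obtain ⟨_, i, hi, hne⟩ := hm
    rw [P, mem_ideal_span_X_image]
    intro m' hm'
    have : m' = m := by
      have := support_monomial_subset hm'
      simpa using this
    exact ⟨i, hi, this ▸ hne⟩
  have h2 : ∀ m ∈ p.support.filter
      (fun m => ¬ ∃ i ∈ ({0, 1, 3} : Set (Fin 5)), m i ≠ 0),
      phi K (monomial m (coeff m p)) = monomial m (coeff m p) := by
    intro m hm
    rw [Finset.mem_filter] at hm
    push_neg at hm
    obtain ⟨-, hz⟩ := hm
    rw [phi, aeval_monomial]
    have : (m.prod fun i k => (if i = 0 ∨ i = 1 ∨ i = 3 then 0 else X i) ^ k)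
        = m.prod fun i k => (X i : MvPolynomial (Fin 5) K) ^ k := by
      apply Finsupp.prod_congr
      intro i hi
      have hne : ¬ (i = 0 ∨ i = 1 ∨ i = 3) := by
        rintro (rfl | rfl | rfl) <;>
          exact (Finsupp.mem_support_iff.mp hi) (hz _ (by simp))
      rw [if_neg hne]
    rw [this, monomial_eq, algebraMap_eq]
  have hker1 : phi K (∑ m ∈ t, monomial m (coeff m p)) = 0 := P_le_ker h1
  have : (0 : MvPolynomial (Fin 5) K) =
      ∑ m ∈ p.support.filter (fun m => ¬ ∃ i ∈ ({0, 1, 3} : Set (Fin 5)), m i ≠ 0),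
        monomial m (coeff m p) := by
    rw [← hp]
    conv_lhs => rw [hp_eq]
    rw [map_add, hker1, zero_add, map_sum]
    exact Finset.sum_congr rfl h2
  rw [hp_eq, ← this, add_zero]
  exact h1

lemma P_prime : (P K).IsPrime := by
  have : P K = RingHom.ker (phi K) := le_antisymm P_le_ker ker_le_P
  rw [this]
  exact RingHom.ker_isPrime _

/-- The witness polynomial `x₃ (x₄ x₅)ⁿ`. -/
def g (K : Type*) [Field K] (n : ℕ) : MvPolynomial (Fin 5) K := X 2 * (X 3 * X 4) ^ n

lemma g_eq (n : ℕ) : g K n = monomial (gexp n) 1 := by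
  rw [g, gexp]
  rw [X, X, X, monomial_mul, monomial_pow, monomial_mul, one_mul]; norm_num

lemma g_hom (n : ℕ) : (g K n).IsHomogeneous (2 * n + 1) := by
  have : (g K n).IsHomogeneous (1 + (1 + 1) * n) :=
    (isHomogeneous_X K 2).mul (((isHomogeneous_X K 3).mul (isHomogeneous_X K 4)).pow n)
  convert this using 1
  ring

lemma edge_mem {i j : Fin 5} (h : (SimpleGraph.cycleGraph 5).Adj i j) :
    (X i * X j : MvPolynomial (Fin 5) K) ∈ edgeIdeal K (SimpleGraph.cycleGraph 5) :=
  Ideal.subset_span ⟨i, j, h, rfl⟩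

lemma colon_eq {n : ℕ} (hn : 1 ≤ n) :
    Submodule.colon ((edgeIdeal K (SimpleGraph.cycleGraph 5)) ^ (n + 1))
      (Ideal.span {g K n}) = P K := by
  apply le_antisymm
  · intro p hp
    have hp' : p * g K n ∈ (edgeIdeal K (SimpleGraph.cycleGraph 5)) ^ (n + 1) :=
      Ideal.mem_colon_span_singleton.mp hp
    have hp2 := mem_ideal_span_monomial_image.mp (pow_le_span n hp')
    rw [P, mem_ideal_span_X_image]
    intro m hm
    by_contra hcon
    push_neg at hcon
    have h0 : m 0 = 0 := by simpa using hcon 0 (by simp)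
    have h1 : m 1 = 0 := by simpa using hcon 1 (by simp)
    have h3 : m 3 = 0 := by simpa using hcon 3 (by simp)
    have hmem : m + gexp n ∈ (p * g K n).support := by
      rw [MvPolynomial.mem_support_iff, g_eq, coeff_mul_monomial, mul_one]
      exact MvPolynomial.mem_support_iff.mp hm
    obtain ⟨s, hsS, hle⟩ := hp2 _ hmem
    exact keyA hsS h0 h1 h3 hle
  · rw [P, Ideal.span_le]
    rintro x ⟨i, hi, rfl⟩
    obtain ⟨m, rfl⟩ : ∃ m, n = m + 1 := ⟨n - 1, by omega⟩
    rw [SetLike.mem_coe]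
    rcases hi with rfl | rfl | rfl
    · rw [Ideal.mem_colon_span_singleton]
      have key : (X 0 : MvPolynomial (Fin 5) K) * g K (m + 1) =
          (X 4 * X 0) * ((X 2 * X 3) * (X 3 * X 4) ^ m) := by rw [g]; ring
      rw [key, pow_succ']
      exact Ideal.mul_mem_mul (edge_mem adj40) (by
        rw [pow_succ']
        exact Ideal.mul_mem_mul (edge_mem adj23) (Ideal.pow_mem_pow (edge_mem adj34) m))
    · rw [Ideal.mem_colon_span_singleton]
      have key : (X 1 : MvPolynomial (Fin 5) K) * g K (m + 1) =
          (X 1 * X 2) * (X 3 * X 4) ^ (m + 1) := by rw [g]; ring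
      rw [key, pow_succ']
      exact Ideal.mul_mem_mul (edge_mem adj12) (Ideal.pow_mem_pow (edge_mem adj34) (m + 1))
    · rw [Ideal.mem_colon_span_singleton]
      have key : (X 3 : MvPolynomial (Fin 5) K) * g K (m + 1) =
          (X 2 * X 3) * (X 3 * X 4) ^ (m + 1) := by rw [g]; ring
      rw [key, pow_succ']
      exact Ideal.mul_mem_mul (edge_mem adj23) (Ideal.pow_mem_pow (edge_mem adj34) (m + 1))

lemma P_assoc {n : ℕ} (hn : 1 ≤ n) :
    P K ∈ associatedPrimes (MvPolynomial (Fin 5) K)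
      (MvPolynomial (Fin 5) K ⧸ (edgeIdeal K (SimpleGraph.cycleGraph 5)) ^ (n + 1)) := by
  refine ⟨P_prime, Ideal.Quotient.mk _ (g K n), ?_⟩
  suffices h : P K = (⊥ : Submodule _ _).colon {Ideal.Quotient.mk _ (g K n)} by
    rw [← h, P_prime.radical]
  rw [← colon_eq hn]
  ext r
  rw [Submodule.mem_colon_singleton, Submodule.mem_bot, Ideal.mem_colon_span_singleton]
  have : r • (Ideal.Quotient.mk ((edgeIdeal K (SimpleGraph.cycleGraph 5)) ^ (n + 1)) (g K n)) =
      Ideal.Quotient.mk _ (r * g K n) := by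
    rw [← smul_eq_mul]
    rfl
  rw [this]
  exact (Ideal.Quotient.eq_zero_iff_mem).symm

end C5Aux

/-- for the edge ideal I of the 5-cycle, v(I^{n+1}) = 2n + 1 for all n ≥ 1. -/
theorem vNumber_pow_edgeIdeal_C5 {K : Type*} [Field K] :
    ∀ n, 1 ≤ n →
      vNumber ((edgeIdeal K (SimpleGraph.cycleGraph 5)) ^ (n + 1)) = 2 * n + 1 := by
  intro n hn
  classical
  set J := (edgeIdeal K (SimpleGraph.cycleGraph 5)) ^ (n + 1) with hJ
  have hmem : (2 * n + 1) ∈ {k : ℕ | ∃ f : MvPolynomial (Fin 5) K, f.IsHomogeneous k ∧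
      Submodule.colon J (Ideal.span {f}) ∈
        associatedPrimes (MvPolynomial (Fin 5) K) (MvPolynomial (Fin 5) K ⧸ J)} := by
    refine ⟨C5Aux.g K n, C5Aux.g_hom n, ?_⟩
    rw [hJ, C5Aux.colon_eq hn]
    exact C5Aux.P_assoc hn
  have hlow : ∀ k ∈ {k : ℕ | ∃ f : MvPolynomial (Fin 5) K, f.IsHomogeneous k ∧
      Submodule.colon J (Ideal.span {f}) ∈
        associatedPrimes (MvPolynomial (Fin 5) K) (MvPolynomial (Fin 5) K ⧸ J)},
      2 * n + 1 ≤ k := by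
    rintro k ⟨f, hf, hass⟩
    have hprime : (Submodule.colon J (Ideal.span {f})).IsPrime := hass.1
    have hfne : f ≠ 0 := by
      rintro rfl
      have htop : Submodule.colon J (Ideal.span {(0 : MvPolynomial (Fin 5) K)}) = ⊤ := by
        apply Submodule.eq_top_iff'.mpr
        intro x
        apply Submodule.mem_colon.mpr
        intro p hp
        rw [Ideal.span_singleton_eq_bot.mpr rfl] at hp
        rw [SetLike.mem_coe, Ideal.mem_bot] at hp
        rw [hp, smul_zero]
        exact Submodule.zero_mem _
      rw [htop] at hprime
      exact hprime.ne_top rfl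
    have hsub : J ≤ Submodule.colon J (Ideal.span {f}) := by
      intro r hr
      exact Ideal.mem_colon_span_singleton.mpr (Ideal.mul_mem_right f _ hr)
    have hX01 : ((MvPolynomial.X 0 * MvPolynomial.X 1 : MvPolynomial (Fin 5) K)) ^ (n + 1) ∈ J :=
      Ideal.pow_mem_pow (C5Aux.edge_mem C5Aux.adj01) (n + 1)
    have hmul := hprime.mem_of_pow_mem _ (hsub hX01)
    have hex : ∃ i : Fin 5, MvPolynomial.X i ∈ Submodule.colon J (Ideal.span {f}) := by
      rcases hprime.mem_or_mem hmul with h | h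
      exacts [⟨0, h⟩, ⟨1, h⟩]
    obtain ⟨i, hi⟩ := hex
    have hXf : MvPolynomial.X i * f ∈ J := Ideal.mem_colon_span_singleton.mp hi
    have hhom : (MvPolynomial.X i * f).IsHomogeneous (1 + k) :=
      (isHomogeneous_X K i).mul hf
    have hne : MvPolynomial.X i * f ≠ 0 := mul_ne_zero (MvPolynomial.X_ne_zero i) hfne
    obtain ⟨d, hd⟩ := MvPolynomial.ne_zero_iff.mp hne
    have hdeg : d.degree = 1 + k := by
      by_contra h
      exact hd (hhom.coeff_eq_zero h)
    have hdeg' : ∑ j : Fin 5, d j = 1 + k := by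
      rw [← hdeg, Finsupp.degree]
      exact (Finset.sum_subset (Finset.subset_univ _)
        (fun j _ hj => Finsupp.notMem_support_iff.mp hj)).symm
    obtain ⟨s, hsS, hle⟩ := MvPolynomial.mem_ideal_span_monomial_image.mp
      (C5Aux.pow_le_span n hXf) d (MvPolynomial.mem_support_iff.mpr hd)
    have h2n := C5Aux.sumSet_deg hsS
    have hmono : ∑ j : Fin 5, s j ≤ ∑ j : Fin 5, d j :=
      Finset.sum_le_sum fun j _ => (Finsupp.le_def.mp hle) j
    omega
  rw [vNumber]
  exact le_antisymm (Nat.sInf_le hmem) (le_csInf ⟨_, hmem⟩ hlow)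
end
end
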